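/- arXiv:2403.16773 — 3 statements merged into one kernel-verified Lean document; each statement's English description precedes it below -/
import Mathlib

section
/- The expected ρ-derivative of the noisy-data least squares objective at the true parameter equals the explicit bias term: E[∂L*_LS/∂ρ (γ0)] = 2λ² [ tr{(S0ᵀS0)² d0 ḋ0} − tr(S0ᵀS0 d0² 𝕎0) ] + 2λx² (β02ᵀ β02) [ tr(S0ᵀS0 d0 ḋ0) − tr(S0 d0² Wᵀ) ]. -/
open MeasureTheory ProbabilityTheory Matrix
open scoped Matrix

namespace PSAR

/-- `S(ρ) = I_N − ρ W`. -/
noncomputable def Smat {N : ℕ} (W : Matrix (Fin N) (Fin N) ℝ) (ρ : ℝ) :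
    Matrix (Fin N) (Fin N) ℝ :=
  1 - ρ • W

/-- `Ω(ρ, σ²) = σ² I_N + λ² S(ρ) S(ρ)ᵀ`. -/
noncomputable def Omat {N : ℕ} (W : Matrix (Fin N) (Fin N) ℝ) (lam2 ρ σ2 : ℝ) :
    Matrix (Fin N) (Fin N) ℝ :=
  σ2 • (1 : Matrix (Fin N) (Fin N) ℝ) + lam2 • (Smat W ρ * (Smat W ρ)ᵀ)

/-- `𝕎S(ρ) = W S(ρ)ᵀ + S(ρ) Wᵀ`. -/
noncomputable def WSmat {N : ℕ} (W : Matrix (Fin N) (Fin N) ℝ) (ρ : ℝ) :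
    Matrix (Fin N) (Fin N) ℝ :=
  W * (Smat W ρ)ᵀ + Smat W ρ * Wᵀ

/-- `𝕎(ρ) = Wᵀ S(ρ) + S(ρ)ᵀ W` (least squares version). -/
noncomputable def WLSmat {N : ℕ} (W : Matrix (Fin N) (Fin N) ℝ) (ρ : ℝ) :
    Matrix (Fin N) (Fin N) ℝ :=
  Wᵀ * Smat W ρ + (Smat W ρ)ᵀ * W

/-- The negative log-likelihood
`L(θ) = −log det S(ρ) + (1/2) log det Ω(ρ,σ²) + (1/2)(S(ρ)Ys − Xβ)ᵀ Ω(ρ,σ²)⁻¹ (S(ρ)Ys − Xβ)`. -/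
noncomputable def nll {N p1 p2 : ℕ} (W : Matrix (Fin N) (Fin N) ℝ) (lam2 : ℝ)
    (X : Matrix (Fin N) (Fin p1 ⊕ Fin p2) ℝ) (Ys : Fin N → ℝ)
    (ρ : ℝ) (β : Fin p1 ⊕ Fin p2 → ℝ) (σ2 : ℝ) : ℝ :=
  - Real.log (Smat W ρ).det + (1 / 2) * Real.log (Omat W lam2 ρ σ2).det
    + (1 / 2) * ((Smat W ρ *ᵥ Ys - X *ᵥ β) ⬝ᵥ
        ((Omat W lam2 ρ σ2)⁻¹ *ᵥ (Smat W ρ *ᵥ Ys - X *ᵥ β)))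

/-- Diagonal matrix `d(ρ)` with `d(ρ)_{ii} = 1/(S(ρ)ᵀ S(ρ))_{ii}`. -/
noncomputable def dmat {N : ℕ} (W : Matrix (Fin N) (Fin N) ℝ) (ρ : ℝ) :
    Matrix (Fin N) (Fin N) ℝ :=
  Matrix.diagonal fun i => ((((Smat W ρ)ᵀ * Smat W ρ) i i)⁻¹)

/-- Entrywise first derivative `ḋ(ρ)` of `d(ρ)` in `ρ`. -/
noncomputable def dmatDot {N : ℕ} (W : Matrix (Fin N) (Fin N) ℝ) (ρ : ℝ) :
    Matrix (Fin N) (Fin N) ℝ :=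
  Matrix.diagonal fun i => deriv (fun r => ((((Smat W r)ᵀ * Smat W r) i i)⁻¹)) ρ

/-- Entrywise second derivative `d̈(ρ)` of `d(ρ)` in `ρ`. -/
noncomputable def dmatDDot {N : ℕ} (W : Matrix (Fin N) (Fin N) ℝ) (ρ : ℝ) :
    Matrix (Fin N) (Fin N) ℝ :=
  Matrix.diagonal fun i => deriv (deriv (fun r => ((((Smat W r)ᵀ * Smat W r) i i)⁻¹))) ρ

/-- Least squares objective `L_LS(γ) = ‖d(ρ) S(ρ)ᵀ (S(ρ)Y − Xβ)‖²`. -/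
noncomputable def lsObj {N p1 p2 : ℕ} (W : Matrix (Fin N) (Fin N) ℝ)
    (X : Matrix (Fin N) (Fin p1 ⊕ Fin p2) ℝ) (Y : Fin N → ℝ)
    (ρ : ℝ) (β : Fin p1 ⊕ Fin p2 → ℝ) : ℝ :=
  ((dmat W ρ * (Smat W ρ)ᵀ) *ᵥ (Smat W ρ *ᵥ Y - X *ᵥ β)) ⬝ᵥ
    ((dmat W ρ * (Smat W ρ)ᵀ) *ᵥ (Smat W ρ *ᵥ Y - X *ᵥ β))

/-- Observed response `Y* = S0⁻¹(Xβ0 + E) + ε`. -/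
noncomputable def Yobs {N p1 p2 : ℕ} (W : Matrix (Fin N) (Fin N) ℝ) (ρ0 : ℝ)
    (X : Matrix (Fin N) (Fin p1 ⊕ Fin p2) ℝ) (β0 : Fin p1 ⊕ Fin p2 → ℝ)
    (E ε : Fin N → ℝ) : Fin N → ℝ :=
  (Smat W ρ0)⁻¹ *ᵥ (X *ᵥ β0 + E) + ε

/-- True response `Y = S0⁻¹(Xβ0 + E)`. -/
noncomputable def Ytrue {N p1 p2 : ℕ} (W : Matrix (Fin N) (Fin N) ℝ) (ρ0 : ℝ)
    (X : Matrix (Fin N) (Fin p1 ⊕ Fin p2) ℝ) (β0 : Fin p1 ⊕ Fin p2 → ℝ)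
    (E : Fin N → ℝ) : Fin N → ℝ :=
  (Smat W ρ0)⁻¹ *ᵥ (X *ᵥ β0 + E)

/-- Observed covariates `X* = (X1, X2 + Ex)`. -/
noncomputable def Xobs {N p1 p2 : ℕ} (X : Matrix (Fin N) (Fin p1 ⊕ Fin p2) ℝ)
    (Ex : Fin N → Fin p2 → ℝ) : Matrix (Fin N) (Fin p1 ⊕ Fin p2) ℝ :=
  X + Matrix.of fun i j => Sum.elim (fun _ => (0 : ℝ)) (fun k => Ex i k) j

/-- All the noise entries of `E`, `ε`, `Ex` gathered as a single family. -/
def noiseFam {Ωs : Type*} {N p2 : ℕ} (E ε : Ωs → Fin N → ℝ)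
    (Ex : Ωs → Fin N → Fin p2 → ℝ) :
    (Fin N ⊕ Fin N ⊕ Fin N × Fin p2) → Ωs → ℝ :=
  fun z ω => Sum.elim (fun i => E ω i) (Sum.elim (fun i => ε ω i) (fun q => Ex ω q.1 q.2)) z

-- ===================== auxiliary lemmas =====================
section Aux

open MeasureTheory ProbabilityTheory

variable {Ωs : Type*} [MeasurableSpace Ωs] {μ : Measure Ωs} [IsProbabilityMeasure μ]

lemma aux_mul_int {f g : Ωs → ℝ} (hf : MemLp f 2 μ) (hg : MemLp g 2 μ) :
    Integrable (fun ω => f ω * g ω) μ := by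
  have h := hg.smul (φ := f) hf (r := 1)
  exact memLp_one_iff_integrable.mp h

lemma integral_linform {ι : Type*} [Fintype ι] (Z : ι → Ωs → ℝ)
    (hindep : ∀ z w, z ≠ w → IndepFun (Z z) (Z w) μ)
    (hL2 : ∀ z, MemLp (Z z) 2 μ) (hmean : ∀ z, ∫ ω, Z z ω ∂μ = 0)
    (a b : ι → ℝ) (a0 b0 : ℝ) :
    ∫ ω, (a0 + ∑ z, a z * Z z ω) * (b0 + ∑ z, b z * Z z ω) ∂μ
      = a0 * b0 + ∑ z, a z * b z * ∫ ω, (Z z ω) ^ 2 ∂μ := by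
  classical
  have hint1 : ∀ z, Integrable (Z z) μ :=
    fun z => memLp_one_iff_integrable.mp ((hL2 z).mono_exponent (by norm_num))
  have hint2 : ∀ z w, Integrable (fun ω => Z z ω * Z w ω) μ :=
    fun z w => aux_mul_int (hL2 z) (hL2 w)
  have key : ∀ z w : ι, ∫ ω, Z z ω * Z w ω ∂μ = if z = w then ∫ ω, (Z z ω) ^ 2 ∂μ else 0 := by
    intro z w
    by_cases h : z = w
    · subst h; simp [sq]
    · have h2 := (hindep z w h).integral_mul_eq_mul_integral (hint1 z).1 (hint1 w).1
      rw [hmean z, hmean w] at h2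
      rw [if_neg h]
      simpa using h2
  have expand : (fun ω => (a0 + ∑ z, a z * Z z ω) * (b0 + ∑ z, b z * Z z ω))
      = fun ω => a0 * b0 + ((∑ z, (a0 * b z) * Z z ω) + ((∑ z, (b0 * a z) * Z z ω)
        + ∑ z, ∑ w, (a z * b w) * (Z z ω * Z w ω))) := by
    funext ω
    have h1 : (∑ z, a z * Z z ω) * (∑ w, b w * Z w ω)
        = ∑ z, ∑ w, (a z * b w) * (Z z ω * Z w ω) := by
      rw [Finset.sum_mul_sum]
      exact Finset.sum_congr rfl fun z _ => Finset.sum_congr rfl fun w _ => by ring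
    have h2 : a0 * (∑ z, b z * Z z ω) = ∑ z, (a0 * b z) * Z z ω := by
      rw [Finset.mul_sum]; exact Finset.sum_congr rfl fun z _ => by ring
    have h3 : (∑ z, a z * Z z ω) * b0 = ∑ z, (b0 * a z) * Z z ω := by
      rw [Finset.sum_mul]; exact Finset.sum_congr rfl fun z _ => by ring
    rw [← h1, ← h2, ← h3]; ring
  rw [expand]
  have i1 : Integrable (fun ω => ∑ z, (a0 * b z) * Z z ω) μ :=
    integrable_finset_sum _ fun z _ => (hint1 z).const_mul _
  have i2 : Integrable (fun ω => ∑ z, (b0 * a z) * Z z ω) μ :=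
    integrable_finset_sum _ fun z _ => (hint1 z).const_mul _
  have i3 : Integrable (fun ω => ∑ z, ∑ w, (a z * b w) * (Z z ω * Z w ω)) μ :=
    integrable_finset_sum _ fun z _ =>
      integrable_finset_sum _ fun w _ => (hint2 z w).const_mul _
  have i23 : Integrable (fun ω => (∑ z, (b0 * a z) * Z z ω)
      + ∑ z, ∑ w, (a z * b w) * (Z z ω * Z w ω)) μ := i2.add i3
  have i123 : Integrable (fun ω => (∑ z, (a0 * b z) * Z z ω) + ((∑ z, (b0 * a z) * Z z ω)
      + ∑ z, ∑ w, (a z * b w) * (Z z ω * Z w ω))) μ := i1.add i23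
  rw [integral_add (integrable_const (a0 * b0)) i123, integral_add i1 i23,
    integral_add i2 i3,
    integral_finset_sum _ (fun z _ => (hint1 z).const_mul _),
    integral_finset_sum _ (fun z _ => (hint1 z).const_mul _),
    integral_finset_sum _ (fun z _ =>
      integrable_finset_sum _ fun w _ => (hint2 z w).const_mul _)]
  simp only [integral_const_mul, hmean, mul_zero, Finset.sum_const_zero, integral_const,
    measure_univ, probReal_univ, ENNReal.toReal_one, smul_eq_mul, one_mul, zero_add, add_zero]
  congr 1
  refine Finset.sum_congr rfl fun z _ => ?_
  rw [integral_finset_sum _ (fun w _ => (hint2 z w).const_mul _)]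
  simp only [integral_const_mul]
  rw [Finset.sum_eq_single z]
  · rw [key z z, if_pos rfl]
  · intro w _ hw; rw [key z w, if_neg (Ne.symm hw), mul_zero]
  · intro h; exact absurd (Finset.mem_univ z) h

lemma integral_quad {ι : Type*} [Fintype ι] (Z : ι → Ωs → ℝ)
    (hindep : ∀ z w, z ≠ w → IndepFun (Z z) (Z w) μ)
    (hL2 : ∀ z, MemLp (Z z) 2 μ) (hmean : ∀ z, ∫ ω, Z z ω ∂μ = 0)
    {n : ℕ} (M B : Matrix (Fin n) (Fin n) ℝ)
    (Ra Qa : Fin n → ι → ℝ) (q0 : Fin n → ℝ) :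
    ∫ ω, (2 * ∑ j, ∑ k, M j k * ((0 + ∑ z, Ra j z * Z z ω) * (0 + ∑ z, Ra k z * Z z ω))
      - 2 * ∑ j, ∑ k, B j k * ((0 + ∑ z, Ra j z * Z z ω)
          * (q0 k + ∑ z, Qa k z * Z z ω))) ∂μ
    = 2 * ∑ j, ∑ k, M j k * (∑ z, Ra j z * Ra k z * ∫ ω, (Z z ω) ^ 2 ∂μ)
      - 2 * ∑ j, ∑ k, B j k * (∑ z, Ra j z * Qa k z * ∫ ω, (Z z ω) ^ 2 ∂μ) := by
  have lf : ∀ (a0 : ℝ) (a : ι → ℝ), MemLp (fun ω => a0 + ∑ z, a z * Z z ω) 2 μ :=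
    fun a0 a => (memLp_const a0).add
      (memLp_finsetSum _ fun z _ => ((hL2 z).const_mul _))
  have ii : ∀ (a0 b0 : ℝ) (a b : ι → ℝ),
      Integrable (fun ω => (a0 + ∑ z, a z * Z z ω) * (b0 + ∑ z, b z * Z z ω)) μ :=
    fun a0 b0 a b => aux_mul_int (lf a0 a) (lf b0 b)
  have ifM : Integrable (fun ω => ∑ j, ∑ k, M j k
      * ((0 + ∑ z, Ra j z * Z z ω) * (0 + ∑ z, Ra k z * Z z ω))) μ :=
    integrable_finset_sum _ fun j _ => integrable_finset_sum _ fun k _ =>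
      (ii 0 0 (Ra j) (Ra k)).const_mul _
  have ifB : Integrable (fun ω => ∑ j, ∑ k, B j k
      * ((0 + ∑ z, Ra j z * Z z ω) * (q0 k + ∑ z, Qa k z * Z z ω))) μ :=
    integrable_finset_sum _ fun j _ => integrable_finset_sum _ fun k _ =>
      (ii 0 (q0 k) (Ra j) (Qa k)).const_mul _
  rw [integral_sub (ifM.const_mul 2) (ifB.const_mul 2), integral_const_mul, integral_const_mul,
    integral_finset_sum _ (fun j _ => integrable_finset_sum _ fun k _ =>
      (ii 0 0 (Ra j) (Ra k)).const_mul (M j k)),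
    integral_finset_sum _ (fun j _ => integrable_finset_sum _ fun k _ =>
      (ii 0 (q0 k) (Ra j) (Qa k)).const_mul (B j k))]
  congr 1
  · congr 1
    refine Finset.sum_congr rfl fun j _ => ?_
    rw [integral_finset_sum _ (fun k _ => (ii 0 0 (Ra j) (Ra k)).const_mul _)]
    refine Finset.sum_congr rfl fun k _ => ?_
    rw [integral_const_mul, integral_linform Z hindep hL2 hmean (Ra j) (Ra k) 0 0]
    simp
  · congr 1
    refine Finset.sum_congr rfl fun j _ => ?_
    rw [integral_finset_sum _ (fun k _ => (ii 0 (q0 k) (Ra j) (Qa k)).const_mul _)]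
    refine Finset.sum_congr rfl fun k _ => ?_
    rw [integral_const_mul, integral_linform Z hindep hL2 hmean (Ra j) (Qa k) 0 (q0 k)]
    simp

end Aux

section MatrixAux

open Matrix

variable {N : ℕ}

noncomputable def gfun (W : Matrix (Fin N) (Fin N) ℝ) (i : Fin N) (ρ : ℝ) : ℝ :=
  ((Smat W ρ)ᵀ * Smat W ρ) i i

noncomputable def gder (W : Matrix (Fin N) (Fin N) ℝ) (i : Fin N) (ρ : ℝ) : ℝ :=
  ∑ k, (-(W k i) * Smat W ρ k i + Smat W ρ k i * (-(W k i)))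

lemma gfun_eq (W : Matrix (Fin N) (Fin N) ℝ) (i : Fin N) (ρ : ℝ) :
    gfun W i ρ = ∑ k, Smat W ρ k i * Smat W ρ k i := by
  simp [gfun, Matrix.mul_apply, Matrix.transpose_apply]

lemma Smat_diag (W : Matrix (Fin N) (Fin N) ℝ) (hW : ∀ i, W i i = 0) (i : Fin N) (ρ : ℝ) :
    Smat W ρ i i = 1 := by
  simp [Smat, Matrix.one_apply, Matrix.sub_apply, hW]

lemma gfun_pos (W : Matrix (Fin N) (Fin N) ℝ) (hW : ∀ i, W i i = 0) (i : Fin N) (ρ : ℝ) :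
    0 < gfun W i ρ := by
  rw [gfun_eq]
  have h1 : Smat W ρ i i * Smat W ρ i i ≤ ∑ k, Smat W ρ k i * Smat W ρ k i :=
    Finset.single_le_sum (f := fun k => Smat W ρ k i * Smat W ρ k i)
      (fun k _ => mul_self_nonneg _) (Finset.mem_univ i)
  rw [Smat_diag W hW i ρ] at h1
  linarith

lemma hasDerivAt_S (W : Matrix (Fin N) (Fin N) ℝ) (k i : Fin N) (ρ : ℝ) :
    HasDerivAt (fun r => Smat W r k i) (-(W k i)) ρ := by
  have h : (fun r : ℝ => Smat W r k i)
      = fun r : ℝ => (1 : Matrix (Fin N) (Fin N) ℝ) k i - r * W k i := by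
    funext r; simp [Smat, Matrix.sub_apply]
  rw [h]
  simpa using ((hasDerivAt_id ρ).mul_const (W k i)).const_sub ((1 : Matrix (Fin N) (Fin N) ℝ) k i)

lemma hasDerivAt_g (W : Matrix (Fin N) (Fin N) ℝ) (i : Fin N) (ρ : ℝ) :
    HasDerivAt (fun r => gfun W i r) (gder W i ρ) ρ := by
  have h : (fun r => gfun W i r) = fun r => ∑ k, Smat W r k i * Smat W r k i :=
    funext fun r => gfun_eq W i r
  rw [h]
  exact HasDerivAt.fun_sum fun k _ => (hasDerivAt_S W k i ρ).mul (hasDerivAt_S W k i ρ)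

lemma hasDerivAt_dinv (W : Matrix (Fin N) (Fin N) ℝ) (hW : ∀ i, W i i = 0) (i : Fin N) (ρ : ℝ) :
    HasDerivAt (fun r => (gfun W i r)⁻¹) (-(gder W i ρ) / (gfun W i ρ) ^ 2) ρ :=
  (hasDerivAt_g W i ρ).inv (ne_of_gt (gfun_pos W hW i ρ))

lemma resid_apply {p1 p2 : ℕ} (W : Matrix (Fin N) (Fin N) ℝ)
    (Xs : Matrix (Fin N) (Fin p1 ⊕ Fin p2) ℝ) (Y : Fin N → ℝ) (β : Fin p1 ⊕ Fin p2 → ℝ)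
    (ρ : ℝ) (j : Fin N) :
    (Smat W ρ *ᵥ Y - Xs *ᵥ β) j = Y j - ρ * (W *ᵥ Y) j - (Xs *ᵥ β) j := by
  simp [Smat, Matrix.sub_mulVec, Matrix.smul_mulVec, sub_sub]

lemma uentry (W : Matrix (Fin N) (Fin N) ℝ) (ρ : ℝ) (v : Fin N → ℝ) (i : Fin N) :
    ((dmat W ρ * (Smat W ρ)ᵀ) *ᵥ v) i = (gfun W i ρ)⁻¹ * ∑ j, Smat W ρ j i * v j := by
  simp [dmat, gfun, Matrix.mulVec, dotProduct, Matrix.diagonal_mul,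
    Matrix.transpose_apply, Finset.mul_sum, mul_assoc]

lemma lsObj_hasDerivAt {p1 p2 : ℕ} (W : Matrix (Fin N) (Fin N) ℝ) (hW : ∀ i, W i i = 0)
    (Xs : Matrix (Fin N) (Fin p1 ⊕ Fin p2) ℝ) (Y : Fin N → ℝ) (β : Fin p1 ⊕ Fin p2 → ℝ)
    (ρ0 : ℝ) :
    HasDerivAt (fun ρ => lsObj W Xs Y ρ β)
      (∑ i, 2 * ((gfun W i ρ0)⁻¹ * ∑ j, Smat W ρ0 j i * (Smat W ρ0 *ᵥ Y - Xs *ᵥ β) j) *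
        ((-(gder W i ρ0) / (gfun W i ρ0) ^ 2) *
            (∑ j, Smat W ρ0 j i * (Smat W ρ0 *ᵥ Y - Xs *ᵥ β) j)
          + (gfun W i ρ0)⁻¹ *
            (∑ j, (-(W j i) * (Smat W ρ0 *ᵥ Y - Xs *ᵥ β) j
              + Smat W ρ0 j i * (-((W *ᵥ Y) j)))))) ρ0 := by
  have hrepr : (fun ρ => lsObj W Xs Y ρ β)
      = fun ρ => ∑ i, ((gfun W i ρ)⁻¹
          * ∑ j, Smat W ρ j i * (Y j - ρ * (W *ᵥ Y) j - (Xs *ᵥ β) j)) ^ 2 := by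
    funext ρ
    simp only [lsObj, dotProduct]
    refine Finset.sum_congr rfl fun i _ => ?_
    rw [uentry W ρ _ i, sq]
    congr 2 <;> exact Finset.sum_congr rfl fun j _ => by rw [resid_apply]
  rw [hrepr]
  apply HasDerivAt.fun_sum
  intro i _
  have hrrj : ∀ j : Fin N, HasDerivAt (fun ρ => Y j - ρ * (W *ᵥ Y) j - (Xs *ᵥ β) j)
      (-((W *ᵥ Y) j)) ρ0 := by
    intro j
    simpa using (((hasDerivAt_id ρ0).mul_const ((W *ᵥ Y) j)).const_sub (Y j)).sub_const
      ((Xs *ᵥ β) j)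
  have hinner : HasDerivAt (fun ρ => ∑ j, Smat W ρ j i * (Y j - ρ * (W *ᵥ Y) j - (Xs *ᵥ β) j))
      (∑ j, (-(W j i) * (Smat W ρ0 *ᵥ Y - Xs *ᵥ β) j + Smat W ρ0 j i * (-((W *ᵥ Y) j)))) ρ0 := by
    have := HasDerivAt.fun_sum (u := Finset.univ)
      (A := fun j ρ => Smat W ρ j i * (Y j - ρ * (W *ᵥ Y) j - (Xs *ᵥ β) j))
      (A' := fun j => -(W j i) * (Y j - ρ0 * (W *ᵥ Y) j - (Xs *ᵥ β) j)
        + Smat W ρ0 j i * (-((W *ᵥ Y) j)))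
      (fun j _ => (hasDerivAt_S W j i ρ0).fun_mul (hrrj j))
    convert this using 2 with j
    · rfl
    · rfl
    rw [resid_apply]
  have hu : HasDerivAt (fun ρ => (gfun W i ρ)⁻¹
      * ∑ j, Smat W ρ j i * (Y j - ρ * (W *ᵥ Y) j - (Xs *ᵥ β) j))
      ((-(gder W i ρ0) / (gfun W i ρ0) ^ 2) *
          (∑ j, Smat W ρ0 j i * (Smat W ρ0 *ᵥ Y - Xs *ᵥ β) j)
        + (gfun W i ρ0)⁻¹ *
          (∑ j, (-(W j i) * (Smat W ρ0 *ᵥ Y - Xs *ᵥ β) j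
            + Smat W ρ0 j i * (-((W *ᵥ Y) j))))) ρ0 := by
    have := (hasDerivAt_dinv W hW i ρ0).fun_mul hinner
    convert this using 2
    · rfl
    · rfl
    · congr 1
      exact Finset.sum_congr rfl fun j _ => by rw [resid_apply]
  have hsq := hu.fun_pow 2
  convert hsq using 1
  · rfl
  have hres : ∀ j, (Smat W ρ0 *ᵥ Y - Xs *ᵥ β) j = Y j - ρ0 * (W *ᵥ Y) j - (Xs *ᵥ β) j :=
    fun j => resid_apply W Xs Y β ρ0 j
  simp only [hres]
  ring

lemma sum_rearrange {n : ℕ} (A C : Matrix (Fin n) (Fin n) ℝ) (r q : Fin n → ℝ) :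
    ∑ i, 2 * (∑ j, A i j * r j) * ((∑ j, C i j * r j) - (∑ j, A i j * q j))
      = 2 * (∑ j, ∑ k, (Aᵀ * C) j k * (r j * r k))
        - 2 * (∑ j, ∑ k, (Aᵀ * A) j k * (r j * q k)) := by
  have expand : ∀ i : Fin n,
      2 * (∑ j, A i j * r j) * ((∑ j, C i j * r j) - (∑ j, A i j * q j))
        = 2 * (∑ j, ∑ k, (A i j * C i k) * (r j * r k))
          - 2 * (∑ j, ∑ k, (A i j * A i k) * (r j * q k)) := by
    intro i
    have h1 : (∑ j, A i j * r j) * (∑ k, C i k * r k)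
        = ∑ j, ∑ k, (A i j * C i k) * (r j * r k) := by
      rw [Finset.sum_mul_sum]
      exact Finset.sum_congr rfl fun j _ => Finset.sum_congr rfl fun k _ => by ring
    have h2 : (∑ j, A i j * r j) * (∑ k, A i k * q k)
        = ∑ j, ∑ k, (A i j * A i k) * (r j * q k) := by
      rw [Finset.sum_mul_sum]
      exact Finset.sum_congr rfl fun j _ => Finset.sum_congr rfl fun k _ => by ring
    rw [mul_sub, mul_assoc, mul_assoc, h1, h2]
  rw [Finset.sum_congr rfl fun i _ => expand i]
  rw [Finset.sum_sub_distrib]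
  congr 1
  · rw [← Finset.mul_sum, Finset.sum_comm]
    congr 1
    refine Finset.sum_congr rfl fun j _ => ?_
    rw [Finset.sum_comm]
    refine Finset.sum_congr rfl fun k _ => ?_
    rw [Matrix.mul_apply, Finset.sum_mul]
    refine Finset.sum_congr rfl fun i _ => by simp [Matrix.transpose_apply]; try ring
  · rw [← Finset.mul_sum, Finset.sum_comm]
    congr 1
    refine Finset.sum_congr rfl fun j _ => ?_
    rw [Finset.sum_comm]
    refine Finset.sum_congr rfl fun k _ => ?_
    rw [Matrix.mul_apply, Finset.sum_mul]
    refine Finset.sum_congr rfl fun i _ => by simp [Matrix.transpose_apply]; try ring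

lemma trace_of_double_sum {n : ℕ} (P Q : Matrix (Fin n) (Fin n) ℝ) :
    ∑ j, ∑ k, P j k * Q k j = Matrix.trace (P * Q) := by
  simp [Matrix.trace, Matrix.diag, Matrix.mul_apply]
  try exact Finset.sum_comm

lemma trace_mul_diag_diag {n : ℕ} (P : Matrix (Fin n) (Fin n) ℝ) (f g : Fin n → ℝ) :
    Matrix.trace (P * Matrix.diagonal f * Matrix.diagonal g)
      = ∑ i, P i i * f i * g i := by
  simp [Matrix.trace, Matrix.diag, Matrix.mul_apply, Matrix.diagonal, Finset.sum_ite_eq,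
    mul_assoc]

lemma tr_rot (A B : Matrix (Fin N) (Fin N) ℝ) : trace (A * B) = trace (B * A) :=
  Matrix.trace_mul_comm A B

lemma gder_eq (W : Matrix (Fin N) (Fin N) ℝ) (i : Fin N) (ρ : ℝ) :
    gder W i ρ = -2 * ((Smat W ρ)ᵀ * W) i i := by
  have h : gder W i ρ = ∑ k, (-2) * (Smat W ρ k i * W k i) :=
    Finset.sum_congr rfl fun k _ => by ring
  rw [h, ← Finset.mul_sum]
  simp [Matrix.mul_apply, Matrix.transpose_apply]

lemma cancel_trace (W : Matrix (Fin N) (Fin N) ℝ) (hW : ∀ i, W i i = 0) (ρ0 : ℝ) :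
    trace ((Smat W ρ0)ᵀ * Smat W ρ0 * dmat W ρ0 * dmatDot W ρ0)
      = 2 * trace ((Smat W ρ0)ᵀ * W * dmat W ρ0 * dmat W ρ0) := by
  rw [show dmat W ρ0 = Matrix.diagonal (fun i => (gfun W i ρ0)⁻¹) from rfl,
    show dmatDot W ρ0 = Matrix.diagonal
      (fun i => deriv (fun r => (gfun W i r)⁻¹) ρ0) from rfl,
    trace_mul_diag_diag, trace_mul_diag_diag]
  rw [Finset.mul_sum]
  refine Finset.sum_congr rfl fun i _ => ?_
  have h1 : deriv (fun r => (gfun W i r)⁻¹) ρ0 = -(gder W i ρ0) / (gfun W i ρ0) ^ 2 :=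
    (hasDerivAt_dinv W hW i ρ0).deriv
  have h2 : ((Smat W ρ0)ᵀ * Smat W ρ0) i i = gfun W i ρ0 := rfl
  have h3 := gfun_pos W hW i ρ0
  have hne : gfun W i ρ0 ≠ 0 := ne_of_gt h3
  rw [h1, h2, gder_eq]
  rw [mul_inv_cancel₀ hne, one_mul, div_eq_mul_inv, pow_two, mul_inv]
  ring

lemma final_trace (W : Matrix (Fin N) (Fin N) ℝ) (hW : ∀ i, W i i = 0)
    (ρ0 σ02 lam2 lamx2 b2 : ℝ) (hdet : IsUnit (Smat W ρ0).det) :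
    2 * trace ((dmat W ρ0 * (Smat W ρ0)ᵀ)ᵀ * (dmatDot W ρ0 * (Smat W ρ0)ᵀ - dmat W ρ0 * Wᵀ)
        * (σ02 • (1 : Matrix (Fin N) (Fin N) ℝ) + lam2 • (Smat W ρ0 * (Smat W ρ0)ᵀ)
          + (lamx2 * b2) • (1 : Matrix (Fin N) (Fin N) ℝ)))
      - 2 * trace ((dmat W ρ0 * (Smat W ρ0)ᵀ)ᵀ * (dmat W ρ0 * (Smat W ρ0)ᵀ)
        * (σ02 • (W * (Smat W ρ0)⁻¹) + lam2 • (W * (Smat W ρ0)ᵀ)))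
      = 2 * lam2 *
          (Matrix.trace (((Smat W ρ0)ᵀ * Smat W ρ0) * ((Smat W ρ0)ᵀ * Smat W ρ0) *
              dmat W ρ0 * dmatDot W ρ0)
            - Matrix.trace ((Smat W ρ0)ᵀ * Smat W ρ0 * (dmat W ρ0 * dmat W ρ0) * WLSmat W ρ0))
        + 2 * lamx2 * b2 *
            (Matrix.trace ((Smat W ρ0)ᵀ * Smat W ρ0 * dmat W ρ0 * dmatDot W ρ0)
              - Matrix.trace (Smat W ρ0 * (dmat W ρ0 * dmat W ρ0) * Wᵀ)) := by
  have hDt : (dmat W ρ0)ᵀ = dmat W ρ0 := Matrix.diagonal_transpose _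
  set S := Smat W ρ0 with hS
  set D := dmat W ρ0 with hD
  set Dd := dmatDot W ρ0 with hDd
  have hinv : S⁻¹ * S = 1 := Matrix.nonsing_inv_mul S hdet
  simp only [WLSmat, ← hS, ← hD, ← hDd, Matrix.transpose_mul, Matrix.transpose_transpose,
    hDt, Matrix.mul_sub, Matrix.sub_mul, Matrix.mul_add, Matrix.add_mul, Matrix.mul_smul,
    mul_smul_comm, smul_mul_assoc, Matrix.trace_add, Matrix.trace_sub, Matrix.trace_smul,
    smul_eq_mul, Matrix.mul_one, Matrix.one_mul, Matrix.mul_assoc]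
  have e1 : trace (S * (D * (Dd * Sᵀ))) = trace (Sᵀ * (S * (D * Dd))) := by
    rw [tr_rot]; simp only [Matrix.mul_assoc]
    rw [tr_rot]; simp only [Matrix.mul_assoc]
    rw [tr_rot]; simp only [Matrix.mul_assoc]
  have e2 : trace (S * (D * (D * Wᵀ))) = trace (Wᵀ * (S * (D * D))) := by
    rw [tr_rot]; simp only [Matrix.mul_assoc]
    rw [tr_rot]; simp only [Matrix.mul_assoc]
    rw [tr_rot]; simp only [Matrix.mul_assoc]
  have e3 : trace (S * (D * (Dd * (Sᵀ * (S * Sᵀ)))))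
      = trace (Sᵀ * (S * (Sᵀ * (S * (D * Dd))))) := by
    rw [tr_rot]; simp only [Matrix.mul_assoc]
    rw [tr_rot]; simp only [Matrix.mul_assoc]
    rw [tr_rot]; simp only [Matrix.mul_assoc]
  have e4 : trace (S * (D * (D * (Wᵀ * (S * Sᵀ)))))
      = trace (Sᵀ * (S * (D * (D * (Wᵀ * S))))) := by
    rw [tr_rot]; simp only [Matrix.mul_assoc]
    rw [tr_rot]; simp only [Matrix.mul_assoc]
    rw [tr_rot]; simp only [Matrix.mul_assoc]
    rw [tr_rot]; simp only [Matrix.mul_assoc]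
    rw [tr_rot]; simp only [Matrix.mul_assoc]
  have e5 : trace (S * (D * (D * (Sᵀ * (W * Sᵀ)))))
      = trace (Sᵀ * (S * (D * (D * (Sᵀ * W))))) := by
    rw [tr_rot]; simp only [Matrix.mul_assoc]
    rw [tr_rot]; simp only [Matrix.mul_assoc]
    rw [tr_rot]; simp only [Matrix.mul_assoc]
    rw [tr_rot]; simp only [Matrix.mul_assoc]
    rw [tr_rot]; simp only [Matrix.mul_assoc]
  have e6 : trace (S * (D * (D * (Sᵀ * (W * S⁻¹))))) = trace (D * (D * (Sᵀ * W))) := by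
    rw [tr_rot]; simp only [Matrix.mul_assoc]
    rw [hinv, Matrix.mul_one]
  have e7 : trace (Sᵀ * (W * (D * D))) = trace (D * (D * (Sᵀ * W))) := by
    rw [tr_rot]; simp only [Matrix.mul_assoc]
    rw [tr_rot]; simp only [Matrix.mul_assoc]
  have e8 : trace (Wᵀ * (S * (D * D))) = trace (D * (D * (Sᵀ * W))) := by
    rw [← Matrix.trace_transpose (Wᵀ * (S * (D * D)))]
    simp only [Matrix.transpose_mul, Matrix.transpose_transpose, hDt, Matrix.mul_assoc]
  have cancel : trace (Sᵀ * (S * (D * Dd))) = 2 * trace (Sᵀ * (W * (D * D))) := by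
    have := cancel_trace W hW ρ0
    simp only [← hS, ← hD, ← hDd, Matrix.mul_assoc] at this
    exact this
  rw [e1, e2, e3, e4, e5, e6, e7, e8] at *
  rw [cancel]
  ring

end MatrixAux
-- ===================== end auxiliary lemmas =====================

lemma deriv_form {N : ℕ} (W : Matrix (Fin N) (Fin N) ℝ) (hW : ∀ i, W i i = 0) (ρ0 : ℝ)
    (r q : Fin N → ℝ) :
    (∑ i, 2 * ((gfun W i ρ0)⁻¹ * ∑ j, Smat W ρ0 j i * r j) *
      ((-(gder W i ρ0) / (gfun W i ρ0) ^ 2) * (∑ j, Smat W ρ0 j i * r j)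
        + (gfun W i ρ0)⁻¹ * (∑ j, (-(W j i) * r j + Smat W ρ0 j i * (-(q j))))))
    = ∑ i, 2 * (∑ j, (dmat W ρ0 * (Smat W ρ0)ᵀ) i j * r j) *
        ((∑ j, (dmatDot W ρ0 * (Smat W ρ0)ᵀ - dmat W ρ0 * Wᵀ) i j * r j)
          - (∑ j, (dmat W ρ0 * (Smat W ρ0)ᵀ) i j * q j)) := by
  refine Finset.sum_congr rfl fun i _ => ?_
  have hA : ∀ j, (dmat W ρ0 * (Smat W ρ0)ᵀ) i j = (gfun W i ρ0)⁻¹ * Smat W ρ0 j i := by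
    intro j
    simp [dmat, gfun, Matrix.diagonal_mul, Matrix.transpose_apply]
  have hddot : dmatDot W ρ0
      = Matrix.diagonal (fun i => -(gder W i ρ0) / (gfun W i ρ0) ^ 2) := by
    unfold dmatDot
    exact congrArg Matrix.diagonal (funext fun i => (hasDerivAt_dinv W hW i ρ0).deriv)
  have hC : ∀ j, (dmatDot W ρ0 * (Smat W ρ0)ᵀ - dmat W ρ0 * Wᵀ) i j
      = (-(gder W i ρ0) / (gfun W i ρ0) ^ 2) * Smat W ρ0 j i - (gfun W i ρ0)⁻¹ * W j i := by
    intro j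
    rw [Matrix.sub_apply, hddot]
    simp [dmat, gfun, Matrix.diagonal_mul, Matrix.transpose_apply]
  have h5 : ∑ j, (dmat W ρ0 * (Smat W ρ0)ᵀ) i j * r j
      = (gfun W i ρ0)⁻¹ * ∑ j, Smat W ρ0 j i * r j := by
    rw [Finset.mul_sum]
    exact Finset.sum_congr rfl fun j _ => by rw [hA j]; ring
  have h7 : ∑ j, (dmat W ρ0 * (Smat W ρ0)ᵀ) i j * q j
      = (gfun W i ρ0)⁻¹ * ∑ j, Smat W ρ0 j i * q j := by
    rw [Finset.mul_sum]
    exact Finset.sum_congr rfl fun j _ => by rw [hA j]; ring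
  have h6 : ∑ j, (dmatDot W ρ0 * (Smat W ρ0)ᵀ - dmat W ρ0 * Wᵀ) i j * r j
      = (-(gder W i ρ0) / (gfun W i ρ0) ^ 2) * (∑ j, Smat W ρ0 j i * r j)
        - (gfun W i ρ0)⁻¹ * ∑ j, W j i * r j := by
    rw [Finset.mul_sum, Finset.mul_sum, ← Finset.sum_sub_distrib]
    exact Finset.sum_congr rfl fun j _ => by rw [hC j]; ring
  have h4 : ∑ j, (-(W j i) * r j + Smat W ρ0 j i * (-(q j)))
      = -(∑ j, W j i * r j) + -(∑ j, Smat W ρ0 j i * q j) := by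
    rw [Finset.sum_add_distrib]
    congr 1
    · rw [← Finset.sum_neg_distrib]
      exact Finset.sum_congr rfl fun j _ => by ring
    · rw [← Finset.sum_neg_distrib]
      exact Finset.sum_congr rfl fun j _ => by ring
  rw [h5, h6, h7, h4]
  ring

theorem statement_12
    {Ωs : Type*} [MeasurableSpace Ωs] (μ : Measure Ωs) [IsProbabilityMeasure μ]
    (N p1 p2 : ℕ) (hN : 0 < N) (hp1 : 0 < p1) (hp2 : 0 < p2)
    (W : Matrix (Fin N) (Fin N) ℝ) (hW : ∀ i, W i i = 0)
    (X : Matrix (Fin N) (Fin p1 ⊕ Fin p2) ℝ)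
    (ρ0 : ℝ) (β0 : Fin p1 ⊕ Fin p2 → ℝ) (σ02 lam2 lamx2 : ℝ)
    (hσ : 0 < σ02) (hlam : 0 < lam2) (hlamx : 0 < lamx2)
    (hS0 : 0 < (Smat W ρ0).det)
    (E ε : Ωs → Fin N → ℝ) (Ex : Ωs → Fin N → Fin p2 → ℝ)
    (hindep : iIndepFun (noiseFam E ε Ex) μ)
    (hmom : ∀ z, MemLp (noiseFam E ε Ex z) 4 μ)
    (hmean : ∀ z, ∫ ω, noiseFam E ε Ex z ω ∂μ = 0)
    (hEvar : ∀ i, ∫ ω, (E ω i) ^ 2 ∂μ = σ02)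
    (hepsvar : ∀ i, ∫ ω, (ε ω i) ^ 2 ∂μ = lam2)
    (hExvar : ∀ i j, ∫ ω, (Ex ω i j) ^ 2 ∂μ = lamx2) :
    ∫ ω, deriv (fun ρ =>
        lsObj W (Xobs X (Ex ω)) (Yobs W ρ0 X β0 (E ω) (ε ω)) ρ β0) ρ0 ∂μ
      = 2 * lam2 *
          (Matrix.trace (((Smat W ρ0)ᵀ * Smat W ρ0) * ((Smat W ρ0)ᵀ * Smat W ρ0) *
              dmat W ρ0 * dmatDot W ρ0)
            - Matrix.trace ((Smat W ρ0)ᵀ * Smat W ρ0 * (dmat W ρ0 * dmat W ρ0) * WLSmat W ρ0))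
        + 2 * lamx2 * (∑ k, β0 (Sum.inr k) ^ 2) *
            (Matrix.trace ((Smat W ρ0)ᵀ * Smat W ρ0 * dmat W ρ0 * dmatDot W ρ0)
              - Matrix.trace (Smat W ρ0 * (dmat W ρ0 * dmat W ρ0) * Wᵀ))
  := by
  classical
  have hdet : IsUnit (Smat W ρ0).det := isUnit_iff_ne_zero.mpr (ne_of_gt hS0)
  set Z := noiseFam E ε Ex with hZdef
  have hind : ∀ z w, z ≠ w → IndepFun (Z z) (Z w) μ := fun z w h => hindep.indepFun h
  have hZ2 : ∀ z, MemLp (Z z) 2 μ := fun z => (hmom z).mono_exponent (by norm_num)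
  set Ra : Fin N → (Fin N ⊕ Fin N ⊕ Fin N × Fin p2) → ℝ := fun j =>
    Sum.elim (fun k => if j = k then 1 else 0)
      (Sum.elim (fun k => Smat W ρ0 j k)
        (fun p => if j = p.1 then -(β0 (Sum.inr p.2)) else 0)) with hRadef
  set Qa : Fin N → (Fin N ⊕ Fin N ⊕ Fin N × Fin p2) → ℝ := fun j =>
    Sum.elim (fun k => (W * (Smat W ρ0)⁻¹) j k)
      (Sum.elim (fun k => W j k) (fun _ => 0)) with hQadef
  set q0 : Fin N → ℝ := fun j => ((W * (Smat W ρ0)⁻¹ * X) *ᵥ β0) j with hq0def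
  -- linear-form representation of the residual vector
  have hSY : ∀ ω, Smat W ρ0 *ᵥ Yobs W ρ0 X β0 (E ω) (ε ω)
      = X *ᵥ β0 + E ω + Smat W ρ0 *ᵥ ε ω := by
    intro ω
    rw [Yobs, Matrix.mulVec_add, Matrix.mulVec_mulVec, Matrix.mul_nonsing_inv _ hdet,
      Matrix.one_mulVec]
  have hXo : ∀ ω (j : Fin N), (Xobs X (Ex ω) *ᵥ β0) j
      = (X *ᵥ β0) j + ∑ l, β0 (Sum.inr l) * Ex ω j l := by
    intro ω j
    simp only [Xobs, Matrix.add_mulVec, Pi.add_apply]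
    congr 1
    simp only [Matrix.mulVec, dotProduct, Matrix.of_apply]
    rw [Fintype.sum_sum_type]
    simp only [Sum.elim_inl, Sum.elim_inr, zero_mul, Finset.sum_const_zero, zero_add]
    exact Finset.sum_congr rfl fun l _ => by ring
  have hsum3 : ∀ ω (j : Fin N), (∑ z, Ra j z * Z z ω)
      = E ω j + ((∑ k, Smat W ρ0 j k * ε ω k) + -(∑ l, β0 (Sum.inr l) * Ex ω j l)) := by
    intro ω j
    rw [hRadef, hZdef]
    simp only [Fintype.sum_sum_type, Sum.elim_inl, Sum.elim_inr, noiseFam]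
    congr 1
    · rw [Finset.sum_congr rfl (fun k _ => show
          (if j = k then (1:ℝ) else 0) * E ω k = if j = k then E ω k else 0 by
        split_ifs <;> ring), Finset.sum_ite_eq]
      simp
    congr 1
    · rw [Fintype.sum_prod_type]
      rw [Finset.sum_congr rfl (fun m _ => show
          (∑ l, (if j = m then -(β0 (Sum.inr l)) else 0) * Ex ω m l)
            = if j = m then -(∑ l, β0 (Sum.inr l) * Ex ω m l) else 0 by
        split_ifs with h
        · rw [← Finset.sum_neg_distrib]
          exact Finset.sum_congr rfl fun l _ => by ring
        · simp), Finset.sum_ite_eq]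
      simp
  have hr : ∀ ω j, (Smat W ρ0 *ᵥ Yobs W ρ0 X β0 (E ω) (ε ω) - Xobs X (Ex ω) *ᵥ β0) j
      = 0 + ∑ z, Ra j z * Z z ω := by
    intro ω j
    rw [Pi.sub_apply, hSY ω, hsum3 ω j, hXo ω j, zero_add]
    simp only [Pi.add_apply]
    have hSe : (Smat W ρ0 *ᵥ ε ω) j = ∑ k, Smat W ρ0 j k * ε ω k := rfl
    rw [hSe]
    ring
  have hYobs : ∀ ω, Yobs W ρ0 X β0 (E ω) (ε ω)
      = (Smat W ρ0)⁻¹ *ᵥ (X *ᵥ β0) + (Smat W ρ0)⁻¹ *ᵥ (E ω) + ε ω := by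
    intro ω
    rw [Yobs, Matrix.mulVec_add]
  have hsumq : ∀ ω (j : Fin N), (∑ z, Qa j z * Z z ω)
      = ((W * (Smat W ρ0)⁻¹) *ᵥ E ω) j + (W *ᵥ ε ω) j := by
    intro ω j
    rw [hQadef, hZdef]
    simp only [Fintype.sum_sum_type, Sum.elim_inl, Sum.elim_inr, noiseFam, zero_mul,
      Finset.sum_const_zero, add_zero]
    rfl
  have hq : ∀ ω j, (W *ᵥ Yobs W ρ0 X β0 (E ω) (ε ω)) j = q0 j + ∑ z, Qa j z * Z z ω := by
    intro ω j
    rw [hYobs ω, Matrix.mulVec_add, Matrix.mulVec_add, hsumq ω j]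
    simp only [Pi.add_apply, hq0def, Matrix.mulVec_mulVec, ← Matrix.mul_assoc]
    ring
  -- pointwise derivative
  have hD : ∀ ω, deriv (fun ρ =>
        lsObj W (Xobs X (Ex ω)) (Yobs W ρ0 X β0 (E ω) (ε ω)) ρ β0) ρ0
      = 2 * (∑ j, ∑ k, ((dmat W ρ0 * (Smat W ρ0)ᵀ)ᵀ
              * (dmatDot W ρ0 * (Smat W ρ0)ᵀ - dmat W ρ0 * Wᵀ)) j k
            * ((0 + ∑ z, Ra j z * Z z ω) * (0 + ∑ z, Ra k z * Z z ω)))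
        - 2 * (∑ j, ∑ k, ((dmat W ρ0 * (Smat W ρ0)ᵀ)ᵀ * (dmat W ρ0 * (Smat W ρ0)ᵀ)) j k
            * ((0 + ∑ z, Ra j z * Z z ω) * (q0 k + ∑ z, Qa k z * Z z ω))) := by
    intro ω
    rw [(lsObj_hasDerivAt W hW (Xobs X (Ex ω)) (Yobs W ρ0 X β0 (E ω) (ε ω)) β0 ρ0).deriv]
    rw [deriv_form W hW ρ0
      (fun j => (Smat W ρ0 *ᵥ Yobs W ρ0 X β0 (E ω) (ε ω) - Xobs X (Ex ω) *ᵥ β0) j)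
      (fun j => (W *ᵥ Yobs W ρ0 X β0 (E ω) (ε ω)) j)]
    rw [sum_rearrange (dmat W ρ0 * (Smat W ρ0)ᵀ)
      (dmatDot W ρ0 * (Smat W ρ0)ᵀ - dmat W ρ0 * Wᵀ)
      (fun j => (Smat W ρ0 *ᵥ Yobs W ρ0 X β0 (E ω) (ε ω) - Xobs X (Ex ω) *ᵥ β0) j)
      (fun j => (W *ᵥ Yobs W ρ0 X β0 (E ω) (ε ω)) j)]
    congr 1
    · congr 1
      exact Finset.sum_congr rfl fun j _ => Finset.sum_congr rfl fun k _ => by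
        rw [hr ω j, hr ω k]
    · congr 1
      exact Finset.sum_congr rfl fun j _ => Finset.sum_congr rfl fun k _ => by
        rw [hr ω j, hq ω k]
  simp only [hD]
  rw [integral_quad Z hind hZ2 hmean
    ((dmat W ρ0 * (Smat W ρ0)ᵀ)ᵀ * (dmatDot W ρ0 * (Smat W ρ0)ᵀ - dmat W ρ0 * Wᵀ))
    ((dmat W ρ0 * (Smat W ρ0)ᵀ)ᵀ * (dmat W ρ0 * (Smat W ρ0)ᵀ)) Ra Qa q0]
  -- variances
  have hvar : ∀ z, ∫ ω, (Z z ω) ^ 2 ∂μ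
      = Sum.elim (fun _ : Fin N => σ02)
          (Sum.elim (fun _ : Fin N => lam2) (fun _ : Fin N × Fin p2 => lamx2)) z := by
    rintro (i | i | ⟨i, l⟩)
    · exact hEvar i
    · exact hepsvar i
    · exact hExvar i l
  -- covariance matrices
  have hCval : ∀ j k : Fin N, (∑ z, Ra j z * Ra k z * ∫ ω, (Z z ω) ^ 2 ∂μ)
      = (σ02 • (1 : Matrix (Fin N) (Fin N) ℝ) + lam2 • (Smat W ρ0 * (Smat W ρ0)ᵀ)
          + (lamx2 * (∑ m, β0 (Sum.inr m) ^ 2)) • (1 : Matrix (Fin N) (Fin N) ℝ)) k j := by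
    intro j k
    rw [Finset.sum_congr rfl fun z _ => by rw [hvar z]]
    rw [hRadef]
    simp only [Fintype.sum_sum_type, Sum.elim_inl, Sum.elim_inr]
    have t1 : ∑ m : Fin N, (if j = m then (1:ℝ) else 0) * (if k = m then (1:ℝ) else 0) * σ02
        = (if k = j then (1:ℝ) else 0) * σ02 := by
      rw [Finset.sum_congr rfl (fun m _ => show
          (if j = m then (1:ℝ) else 0) * (if k = m then (1:ℝ) else 0) * σ02
            = if j = m then (if k = m then (1:ℝ) else 0) * σ02 else 0 by
        split_ifs <;> ring)]
      rw [Finset.sum_ite_eq]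
      simp
    have t2 : ∑ m : Fin N, Smat W ρ0 j m * Smat W ρ0 k m * lam2
        = lam2 * (Smat W ρ0 * (Smat W ρ0)ᵀ) k j := by
      rw [Matrix.mul_apply, Finset.mul_sum]
      exact Finset.sum_congr rfl fun m _ => by
        rw [Matrix.transpose_apply]; ring
    have t3 : ∑ z : Fin N × Fin p2,
        (if j = z.1 then -(β0 (Sum.inr z.2)) else 0)
          * (if k = z.1 then -(β0 (Sum.inr z.2)) else 0) * lamx2
        = (if k = j then (1:ℝ) else 0) * (lamx2 * ∑ m, β0 (Sum.inr m) ^ 2) := by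
      rw [Fintype.sum_prod_type]
      rw [Finset.sum_congr rfl (fun m _ => show
          (∑ l : Fin p2, (if j = m then -(β0 (Sum.inr l)) else 0)
            * (if k = m then -(β0 (Sum.inr l)) else 0) * lamx2)
            = if j = m then (if k = m then (1:ℝ) else 0)
                * (lamx2 * ∑ l, β0 (Sum.inr l) ^ 2) else 0 by
        split_ifs with h1 h2 <;> simp [Finset.mul_sum] <;>
          exact Finset.sum_congr rfl fun l _ => by ring)]
      rw [Finset.sum_ite_eq]
      simp
    rw [t1, t2, t3]
    simp only [Matrix.add_apply, Matrix.smul_apply, Matrix.one_apply, smul_eq_mul]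
    split_ifs <;> ring
  have hGval : ∀ j k : Fin N, (∑ z, Ra j z * Qa k z * ∫ ω, (Z z ω) ^ 2 ∂μ)
      = (σ02 • (W * (Smat W ρ0)⁻¹) + lam2 • (W * (Smat W ρ0)ᵀ)) k j := by
    intro j k
    rw [Finset.sum_congr rfl fun z _ => by rw [hvar z]]
    rw [hRadef, hQadef]
    simp only [Fintype.sum_sum_type, Sum.elim_inl, Sum.elim_inr, mul_zero, zero_mul,
      Finset.sum_const_zero, add_zero]
    have t1 : ∑ m : Fin N, (if j = m then (1:ℝ) else 0) * (W * (Smat W ρ0)⁻¹) k m * σ02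
        = σ02 * (W * (Smat W ρ0)⁻¹) k j := by
      rw [Finset.sum_congr rfl (fun m _ => show
          (if j = m then (1:ℝ) else 0) * (W * (Smat W ρ0)⁻¹) k m * σ02
            = if j = m then σ02 * (W * (Smat W ρ0)⁻¹) k m else 0 by
        split_ifs <;> ring)]
      rw [Finset.sum_ite_eq]
      simp
    have t2 : ∑ m : Fin N, Smat W ρ0 j m * W k m * lam2
        = lam2 * (W * (Smat W ρ0)ᵀ) k j := by
      rw [Matrix.mul_apply, Finset.mul_sum]
      exact Finset.sum_congr rfl fun m _ => by
        rw [Matrix.transpose_apply]; ring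
    rw [t1, t2]
    simp only [Matrix.add_apply, Matrix.smul_apply, smul_eq_mul]
  have h1 : (∑ j, ∑ k, ((dmat W ρ0 * (Smat W ρ0)ᵀ)ᵀ
        * (dmatDot W ρ0 * (Smat W ρ0)ᵀ - dmat W ρ0 * Wᵀ)) j k
        * (∑ z, Ra j z * Ra k z * ∫ ω, (Z z ω) ^ 2 ∂μ))
      = Matrix.trace (((dmat W ρ0 * (Smat W ρ0)ᵀ)ᵀ
          * (dmatDot W ρ0 * (Smat W ρ0)ᵀ - dmat W ρ0 * Wᵀ))
        * (σ02 • (1 : Matrix (Fin N) (Fin N) ℝ) + lam2 • (Smat W ρ0 * (Smat W ρ0)ᵀ)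
          + (lamx2 * (∑ m, β0 (Sum.inr m) ^ 2)) • (1 : Matrix (Fin N) (Fin N) ℝ))) := by
    rw [← trace_of_double_sum]
    exact Finset.sum_congr rfl fun j _ => Finset.sum_congr rfl fun k _ => by rw [hCval j k]
  have h2 : (∑ j, ∑ k, ((dmat W ρ0 * (Smat W ρ0)ᵀ)ᵀ * (dmat W ρ0 * (Smat W ρ0)ᵀ)) j k
        * (∑ z, Ra j z * Qa k z * ∫ ω, (Z z ω) ^ 2 ∂μ))
      = Matrix.trace (((dmat W ρ0 * (Smat W ρ0)ᵀ)ᵀ * (dmat W ρ0 * (Smat W ρ0)ᵀ))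
        * (σ02 • (W * (Smat W ρ0)⁻¹) + lam2 • (W * (Smat W ρ0)ᵀ))) := by
    rw [← trace_of_double_sum]
    exact Finset.sum_congr rfl fun j _ => Finset.sum_congr rfl fun k _ => by rw [hGval j k]
  rw [h1, h2]
  exact final_trace W hW ρ0 σ02 lam2 lamx2 (∑ k, β0 (Sum.inr k) ^ 2) hdet


end PSAR
end

section
/- The expected β-gradient of the noisy-data least squares objective at the true parameter equals the explicit bias vector: E[∇_β L*_LS(γ0)] = E[−2 X*ᵀ S0 d0² S0ᵀ (S0 Y* − X* β0)] = (0_{p1}ᵀ, 2λx² tr(S0ᵀS0 d0²) β02ᵀ)ᵀ ∈ ℝ^p. -/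
open MeasureTheory ProbabilityTheory Matrix
open scoped Matrix

namespace PSAR

private lemma quad_expand {n : Type*} [Fintype n] (u b : n → ℝ) (t : ℝ) :
    (u - t • b) ⬝ᵥ (u - t • b)
      = (u ⬝ᵥ u) + t * (-(u ⬝ᵥ b) - (b ⬝ᵥ u)) + t * t * (b ⬝ᵥ b) := by
  simp only [sub_dotProduct, dotProduct_sub, smul_dotProduct,
    dotProduct_smul, smul_eq_mul]
  ring

private lemma dot_shift {n m : Type*} [Fintype n] [Fintype m] [DecidableEq m]
    (A : Matrix n n ℝ) (Xs : Matrix n m ℝ) (x : n → ℝ) (j : m) :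
    ((A *ᵥ x) ⬝ᵥ (A *ᵥ (Xs *ᵥ Pi.single j 1)))
      = ((Xs)ᵀ *ᵥ ((Aᵀ * A) *ᵥ x)) j := by
  rw [Matrix.dotProduct_mulVec, Matrix.dotProduct_mulVec, dotProduct_single,
    ← Matrix.mulVec_transpose, ← Matrix.mulVec_transpose, Matrix.mulVec_mulVec, mul_one]
  simp [Matrix.mulVec_mulVec, Matrix.mul_assoc]

private lemma deriv_quad (c0 c1 c2 : ℝ) :
    deriv (fun t : ℝ => c0 + t * c1 + t * t * c2) 0 = c1 := by
  have h : HasDerivAt (fun t : ℝ => c0 + t * c1 + t * t * c2)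
      (0 + 1 * c1 + (1 * 0 + 0 * 1) * c2) 0 :=
    ((hasDerivAt_const 0 c0).add ((hasDerivAt_id 0).mul_const c1)).add
      (((hasDerivAt_id 0).mul (hasDerivAt_id 0)).mul_const c2)
  simpa using h.deriv

theorem statement_13
    {Ωs : Type*} [MeasurableSpace Ωs] (μ : Measure Ωs) [IsProbabilityMeasure μ]
    (N p1 p2 : ℕ) (hN : 0 < N) (hp1 : 0 < p1) (hp2 : 0 < p2)
    (W : Matrix (Fin N) (Fin N) ℝ) (hW : ∀ i, W i i = 0)
    (X : Matrix (Fin N) (Fin p1 ⊕ Fin p2) ℝ)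
    (ρ0 : ℝ) (β0 : Fin p1 ⊕ Fin p2 → ℝ) (σ02 lam2 lamx2 : ℝ)
    (hσ : 0 < σ02) (hlam : 0 < lam2) (hlamx : 0 < lamx2)
    (hS0 : 0 < (Smat W ρ0).det)
    (E ε : Ωs → Fin N → ℝ) (Ex : Ωs → Fin N → Fin p2 → ℝ)
    (hindep : iIndepFun (noiseFam E ε Ex) μ)
    (hmom : ∀ z, MemLp (noiseFam E ε Ex z) 4 μ)
    (hmean : ∀ z, ∫ ω, noiseFam E ε Ex z ω ∂μ = 0)
    (hEvar : ∀ i, ∫ ω, (E ω i) ^ 2 ∂μ = σ02)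
    (hepsvar : ∀ i, ∫ ω, (ε ω i) ^ 2 ∂μ = lam2)
    (hExvar : ∀ i j, ∫ ω, (Ex ω i j) ^ 2 ∂μ = lamx2) :
    ∀ j : Fin p1 ⊕ Fin p2,
      (∫ ω, deriv (fun t : ℝ =>
          lsObj W (Xobs X (Ex ω)) (Yobs W ρ0 X β0 (E ω) (ε ω)) ρ0
            (β0 + t • (Pi.single j 1 : (Fin p1 ⊕ Fin p2) → ℝ))) 0 ∂μ
        = Sum.elim (fun _ => (0 : ℝ))
            (fun k => 2 * lamx2 *
              Matrix.trace ((Smat W ρ0)ᵀ * Smat W ρ0 * (dmat W ρ0 * dmat W ρ0)) *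
              β0 (Sum.inr k)) j) ∧
      ∫ ω, (-2 : ℝ) *
          (((Xobs X (Ex ω))ᵀ *ᵥ
            ((Smat W ρ0 * (dmat W ρ0 * dmat W ρ0) * (Smat W ρ0)ᵀ) *ᵥ
              (Smat W ρ0 *ᵥ Yobs W ρ0 X β0 (E ω) (ε ω) - Xobs X (Ex ω) *ᵥ β0))) j) ∂μ
        = Sum.elim (fun _ => (0 : ℝ))
            (fun k => 2 * lamx2 *
              Matrix.trace ((Smat W ρ0)ᵀ * Smat W ρ0 * (dmat W ρ0 * dmat W ρ0)) *
              β0 (Sum.inr k)) j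
  := by
  classical
  intro j
  set S0 := Smat W ρ0 with hS0def
  set D := dmat W ρ0 with hDdef
  set M := S0 * (D * D) * S0ᵀ with hMdef
  set F := noiseFam E ε Ex with hFdef
  set vr : (Fin N ⊕ Fin N ⊕ Fin N × Fin p2) → ℝ :=
    Sum.elim (fun _ => σ02) (Sum.elim (fun _ => lam2) fun _ => lamx2) with hvrdef
  set c : Fin N → (Fin N ⊕ Fin N ⊕ Fin N × Fin p2) → ℝ :=
    fun k => Sum.elim (fun m => if m = k then 1 else 0)
      (Sum.elim (fun l => S0 k l) (fun q => if q.1 = k then -β0 (Sum.inr q.2) else 0))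
    with hcdef
  -- basic integrability facts
  have hm2 : ∀ z, MemLp (F z) 2 μ := fun z => (hmom z).mono_exponent (by norm_num)
  have hm1 : ∀ z, Integrable (F z) μ := fun z =>
    ((hmom z).mono_exponent (by norm_num)).integrable le_rfl
  have hmul_int : ∀ z w, Integrable (fun ω => F z ω * F w ω) μ := by
    intro z w
    have h := ((hm2 w).smul (hm2 z) (p := 2) (q := 2) (r := 1)).integrable le_rfl
    exact h
  have hpair : ∀ z w, ∫ ω, F z ω * F w ω ∂μ = if w = z then vr z else 0 := by
    intro z w
    by_cases h : w = z
    · subst h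
      rcases w with i | i | q
      · simpa [hFdef, noiseFam, hvrdef, pow_two] using hEvar i
      · simpa [hFdef, noiseFam, hvrdef, pow_two] using hepsvar i
      · simpa [hFdef, noiseFam, hvrdef, pow_two] using hExvar q.1 q.2
    · have hind : ProbabilityTheory.IndepFun (F z) (F w) μ :=
        hindep.indepFun (fun hzw => h hzw.symm)
      have h2 : ∫ ω, (F z * F w) ω ∂μ = (∫ ω, F z ω ∂μ) * ∫ ω, F w ω ∂μ :=
        hind.integral_mul_eq_mul_integral (hm1 z).aestronglyMeasurable (hm1 w).aestronglyMeasurable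
      simp only [Pi.mul_apply] at h2
      rw [if_neg h, h2, hmean z, zero_mul]
  -- the residual r and its representation
  have hSinv : S0 * S0⁻¹ = 1 := Matrix.mul_nonsing_inv _ (isUnit_iff_ne_zero.mpr hS0.ne')
  set R : Ωs → Fin N → ℝ :=
    fun ω => S0 *ᵥ Yobs W ρ0 X β0 (E ω) (ε ω) - Xobs X (Ex ω) *ᵥ β0 with hRdef
  have hrform : ∀ ω k, R ω k = ∑ z, c k z * F z ω := by
    intro ω k
    simp only [hRdef]
    have h1 : S0 *ᵥ Yobs W ρ0 X β0 (E ω) (ε ω) = (X *ᵥ β0 + E ω) + S0 *ᵥ ε ω := by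
      simp only [Yobs, Matrix.mulVec_add, Matrix.mulVec_mulVec, ← hS0def]
      rw [← Matrix.mul_assoc, hSinv, Matrix.one_mul]
      simp [Matrix.mulVec_add]
    have h2 : (Xobs X (Ex ω) *ᵥ β0) k
        = (X *ᵥ β0) k + ∑ b, β0 (Sum.inr b) * Ex ω k b := by
      simp only [Xobs, Matrix.add_mulVec, Pi.add_apply]
      congr 1
      simp [Matrix.mulVec, dotProduct, Fintype.sum_sum_type, mul_comm]
    have h3 : (S0 *ᵥ ε ω) k = ∑ l, S0 k l * ε ω l := rfl
    have hR : ∑ z, c k z * F z ω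
        = E ω k + (∑ l, S0 k l * ε ω l) + -∑ b, β0 (Sum.inr b) * Ex ω k b := by
      rw [hcdef, hFdef]
      simp only [Fintype.sum_sum_type, Fintype.sum_prod_type, noiseFam, Sum.elim_inl,
        Sum.elim_inr, ite_mul, zero_mul, one_mul, neg_mul]
      have e1 : (∑ m, if m = k then E ω m else 0) = E ω k := by simp
      have e2 : (∑ a, ∑ b, if a = k then -(β0 (Sum.inr b) * Ex ω a b) else 0)
          = -∑ b, β0 (Sum.inr b) * Ex ω k b := by
        have h4 : ∀ a : Fin N, (∑ b, if a = k then -(β0 (Sum.inr b) * Ex ω a b) else 0)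
            = (if a = k then -∑ b, β0 (Sum.inr b) * Ex ω a b else 0) := fun a => by
          split <;> simp
        simp only [h4]
        simp
      rw [e1, e2]
      ring
    rw [Pi.sub_apply, h1, h2, hR]
    simp only [Pi.add_apply, h3]
    ring
  -- fold R
  have hrq : ∀ ω, (fun k => R ω k) = R ω := fun ω => rfl
  -- integrability and values of F w * R k
  have hFr_int : ∀ (w) (k : Fin N), Integrable (fun ω => F w ω * R ω k) μ := by
    intro w k
    have heq : (fun ω => F w ω * R ω k) = fun ω => ∑ z, c k z * (F w ω * F z ω) := by
      funext ω
      rw [hrform ω k, Finset.mul_sum]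
      exact Finset.sum_congr rfl fun z _ => by ring
    rw [heq]
    exact integrable_finset_sum _ fun z _ => (hmul_int w z).const_mul _
  have hFr_val : ∀ (w) (k : Fin N), ∫ ω, F w ω * R ω k ∂μ = c k w * vr w := by
    intro w k
    have heq : (fun ω => F w ω * R ω k) = fun ω => ∑ z, c k z * (F w ω * F z ω) := by
      funext ω
      rw [hrform ω k, Finset.mul_sum]
      exact Finset.sum_congr rfl fun z _ => by ring
    rw [heq, integral_finset_sum _ fun z _ => (hmul_int w z).const_mul _]
    simp only [MeasureTheory.integral_const_mul, hpair]
    simp [mul_ite, Finset.sum_ite_eq', mul_comm]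
  have hr_int : ∀ k : Fin N, Integrable (fun ω => R ω k) μ := by
    intro k
    have heq : (fun ω => R ω k) = fun ω => ∑ z, c k z * F z ω := funext fun ω => hrform ω k
    rw [heq]
    exact integrable_finset_sum _ fun z _ => (hm1 z).const_mul _
  have hr_val : ∀ k : Fin N, ∫ ω, R ω k ∂μ = 0 := by
    intro k
    have heq : (fun ω => R ω k) = fun ω => ∑ z, c k z * F z ω := funext fun ω => hrform ω k
    rw [heq, integral_finset_sum _ fun z _ => (hm1 z).const_mul _]
    simp [MeasureTheory.integral_const_mul, hmean]
  -- the per-entry expectations of Xobs * R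
  have hXsr_int : ∀ i k, Integrable (fun ω => Xobs X (Ex ω) i j * R ω k) μ := by
    intro i k
    rcases j with j1 | j2
    · have heq : (fun ω => Xobs X (Ex ω) i (Sum.inl j1) * R ω k)
          = fun ω => X i (Sum.inl j1) * R ω k := by
        funext ω; simp [Xobs]
      rw [heq]; exact (hr_int k).const_mul _
    · have heq : (fun ω => Xobs X (Ex ω) i (Sum.inr j2) * R ω k)
          = fun ω => X i (Sum.inr j2) * R ω k
              + F (Sum.inr (Sum.inr (i, j2))) ω * R ω k := by
        funext ω; simp [Xobs, hFdef, noiseFam]; ring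
      rw [heq]; exact ((hr_int k).const_mul _).add (hFr_int _ k)
  have hXsr_val : ∀ i k, ∫ ω, Xobs X (Ex ω) i j * R ω k ∂μ
      = if i = k then Sum.elim (fun _ => (0 : ℝ))
          (fun j2 => -(lamx2 * β0 (Sum.inr j2))) j else 0 := by
    intro i k
    rcases j with j1 | j2
    · have heq : (fun ω => Xobs X (Ex ω) i (Sum.inl j1) * R ω k)
          = fun ω => X i (Sum.inl j1) * R ω k := by
        funext ω; simp [Xobs]
      rw [heq, MeasureTheory.integral_const_mul, hr_val, mul_zero]
      simp
    · have heq : (fun ω => Xobs X (Ex ω) i (Sum.inr j2) * R ω k)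
          = fun ω => X i (Sum.inr j2) * R ω k
              + F (Sum.inr (Sum.inr (i, j2))) ω * R ω k := by
        funext ω; simp [Xobs, hFdef, noiseFam]; ring
      rw [heq, integral_add ((hr_int k).const_mul _) (hFr_int _ k),
        MeasureTheory.integral_const_mul, hr_val, hFr_val, mul_zero, zero_add]
      simp only [hcdef, hvrdef, Sum.elim_inr, Sum.elim_inl]
      split_ifs <;> ring
  -- the key expectation identity
  have key : ∫ ω, (-2 : ℝ) * (((Xobs X (Ex ω))ᵀ *ᵥ (M *ᵥ R ω)) j) ∂μ
      = Sum.elim (fun _ => (0 : ℝ))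
          (fun k => 2 * lamx2 * Matrix.trace (S0ᵀ * S0 * (D * D)) * β0 (Sum.inr k)) j := by
    have hg : ∀ ω, (-2 : ℝ) * (((Xobs X (Ex ω))ᵀ *ᵥ (M *ᵥ R ω)) j)
        = ∑ i, ∑ k, (-2 * M i k) * (Xobs X (Ex ω) i j * R ω k) := by
      intro ω
      simp only [Matrix.mulVec, dotProduct, Matrix.transpose_apply, Finset.mul_sum]
      exact Finset.sum_congr rfl fun i _ => Finset.sum_congr rfl fun k _ => by ring
    calc ∫ ω, (-2 : ℝ) * (((Xobs X (Ex ω))ᵀ *ᵥ (M *ᵥ R ω)) j) ∂μ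
        = ∫ ω, ∑ i, ∑ k, (-2 * M i k) * (Xobs X (Ex ω) i j * R ω k) ∂μ := by
          simp only [hg]
      _ = ∑ i, ∑ k, (-2 * M i k) * ∫ ω, Xobs X (Ex ω) i j * R ω k ∂μ := by
          rw [integral_finset_sum _ fun i _ =>
            integrable_finset_sum _ fun k _ => (hXsr_int i k).const_mul _]
          exact Finset.sum_congr rfl fun i _ => by
            rw [integral_finset_sum _ fun k _ => (hXsr_int i k).const_mul _]
            exact Finset.sum_congr rfl fun k _ => MeasureTheory.integral_const_mul _ _
      _ = ∑ i, (-2 * M i i) * Sum.elim (fun _ => (0 : ℝ))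
            (fun j2 => -(lamx2 * β0 (Sum.inr j2))) j := by
          simp only [hXsr_val, mul_ite, mul_zero, Finset.sum_ite_eq, Finset.mem_univ,
            if_true]
      _ = Sum.elim (fun _ => (0 : ℝ))
            (fun k => 2 * lamx2 * Matrix.trace (S0ᵀ * S0 * (D * D)) * β0 (Sum.inr k)) j := by
          have htr : Matrix.trace (S0ᵀ * S0 * (D * D)) = ∑ i, M i i := by
            rw [Matrix.mul_assoc S0ᵀ S0 (D * D), Matrix.trace_mul_comm S0ᵀ (S0 * (D * D)),
              ← hMdef]
            rfl
          rcases j with j1 | j2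
          · simp
          · simp only [Sum.elim_inr]
            rw [htr, ← Finset.sum_mul,
              show (∑ i, (-2 : ℝ) * M i i) = -2 * ∑ i, M i i from (Finset.mul_sum _ _ _).symm]
            ring
  constructor
  · -- the derivative form
    have hpt : ∀ ω, deriv (fun t : ℝ =>
        lsObj W (Xobs X (Ex ω)) (Yobs W ρ0 X β0 (E ω) (ε ω)) ρ0
          (β0 + t • (Pi.single j 1 : (Fin p1 ⊕ Fin p2) → ℝ))) 0
        = (-2 : ℝ) * (((Xobs X (Ex ω))ᵀ *ᵥ (M *ᵥ R ω)) j) := by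
      intro ω
      have hfun : (fun t : ℝ =>
          lsObj W (Xobs X (Ex ω)) (Yobs W ρ0 X β0 (E ω) (ε ω)) ρ0
            (β0 + t • (Pi.single j 1 : (Fin p1 ⊕ Fin p2) → ℝ)))
          = fun t : ℝ =>
            (((D * S0ᵀ) *ᵥ R ω) ⬝ᵥ ((D * S0ᵀ) *ᵥ R ω))
            + t * (-(((D * S0ᵀ) *ᵥ R ω) ⬝ᵥ
                      ((D * S0ᵀ) *ᵥ (Xobs X (Ex ω) *ᵥ Pi.single j 1)))
                   - (((D * S0ᵀ) *ᵥ (Xobs X (Ex ω) *ᵥ Pi.single j 1)) ⬝ᵥ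
                      ((D * S0ᵀ) *ᵥ R ω)))
            + t * t * (((D * S0ᵀ) *ᵥ (Xobs X (Ex ω) *ᵥ Pi.single j 1)) ⬝ᵥ
                        ((D * S0ᵀ) *ᵥ (Xobs X (Ex ω) *ᵥ Pi.single j 1))) := by
        funext t
        rw [show R ω = S0 *ᵥ Yobs W ρ0 X β0 (E ω) (ε ω) - Xobs X (Ex ω) *ᵥ β0 from rfl]
        simp only [lsObj, ← hS0def, ← hDdef]
        rw [Matrix.mulVec_add, Matrix.mulVec_smul, sub_add_eq_sub_sub,
          Matrix.mulVec_sub, Matrix.mulVec_smul]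
        exact quad_expand _ _ t
      rw [hfun, deriv_quad]
      have hDT : Dᵀ = D := by
        rw [hDdef]; exact Matrix.diagonal_transpose _
      have hAA : (D * S0ᵀ)ᵀ * (D * S0ᵀ) = M := by
        rw [Matrix.transpose_mul, Matrix.transpose_transpose, hDT, hMdef,
          Matrix.mul_assoc, Matrix.mul_assoc, Matrix.mul_assoc]
      have hb : (((D * S0ᵀ) *ᵥ R ω) ⬝ᵥ ((D * S0ᵀ) *ᵥ (Xobs X (Ex ω) *ᵥ Pi.single j 1)))
          = ((Xobs X (Ex ω))ᵀ *ᵥ (M *ᵥ R ω)) j := by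
        rw [dot_shift, hAA]
      rw [dotProduct_comm (((D * S0ᵀ) *ᵥ (Xobs X (Ex ω) *ᵥ Pi.single j 1))) _, hb]
      ring
    calc (∫ ω, deriv (fun t : ℝ =>
          lsObj W (Xobs X (Ex ω)) (Yobs W ρ0 X β0 (E ω) (ε ω)) ρ0
            (β0 + t • (Pi.single j 1 : (Fin p1 ⊕ Fin p2) → ℝ))) 0 ∂μ)
        = ∫ ω, (-2 : ℝ) * (((Xobs X (Ex ω))ᵀ *ᵥ (M *ᵥ R ω)) j) ∂μ :=
          integral_congr_ae (Filter.Eventually.of_forall hpt)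
      _ = _ := key
  · exact key


end PSAR
end

section
/- The difference of expected mixed (ρ, β) second derivatives of the noisy- and true-data least squares objectives at the true parameter is the explicit vector: E[∂²L*_LS/∂ρ∂β (γ0)] − E[∂²L_LS/∂ρ∂β (γ0)] = (0_{p1}ᵀ, 4λx² tr(S0 d0 ḋ0 S0ᵀ) β02ᵀ − 4λx² tr(W d0² S0ᵀ) β02ᵀ)ᵀ ∈ ℝ^p. -/
open MeasureTheory ProbabilityTheory Matrix
open scoped Matrix

namespace PSAR

section Helpers

variable {N : ℕ} (W : Matrix (Fin N) (Fin N) ℝ)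

lemma smat_apply (ρ : ℝ) (i k : Fin N) :
    Smat W ρ i k = (if i = k then 1 else 0) - ρ * W i k := by
  simp [Smat, Matrix.sub_apply, Matrix.one_apply, Matrix.smul_apply]

lemma hasDerivAt_smat (ρ : ℝ) (i k : Fin N) :
    HasDerivAt (fun r => Smat W r i k) (-(W i k)) ρ := by
  have h : (fun r => Smat W r i k)
      = fun r => (if i = k then (1:ℝ) else 0) - r * W i k :=
    funext fun r => smat_apply W r i k
  rw [h]
  simpa using ((hasDerivAt_id ρ).mul_const (W i k)).const_sub (if i = k then (1:ℝ) else 0)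

lemma sts_diag (hW : ∀ i, W i i = 0) (ρ : ℝ) (i : Fin N) :
    ((Smat W ρ)ᵀ * Smat W ρ) i i = 1 + ρ ^ 2 * ∑ k, (W k i) ^ 2 := by
  rw [Matrix.mul_apply]
  have : ∀ k : Fin N, (Smat W ρ)ᵀ i k * Smat W ρ k i
      = (if k = i then (1:ℝ) else 0) + ρ ^ 2 * (W k i) ^ 2 := by
    intro k
    rw [Matrix.transpose_apply, smat_apply]
    by_cases hk : k = i
    · subst hk; simp [hW k]
    · simp [hk]; ring
  rw [Finset.sum_congr rfl fun k _ => this k, Finset.sum_add_distrib]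
  simp [Finset.mul_sum]

lemma dfun_eq (hW : ∀ i, W i i = 0) (i : Fin N) :
    (fun r => ((((Smat W r)ᵀ * Smat W r) i i)⁻¹))
      = fun r => (1 + r ^ 2 * ∑ k, (W k i) ^ 2)⁻¹ :=
  funext fun r => by rw [sts_diag W hW r i]

lemma hasDerivAt_dmat (hW : ∀ i, W i i = 0) (ρ0 : ℝ) (i k : Fin N) :
    HasDerivAt (fun ρ => dmat W ρ i k) (dmatDot W ρ0 i k) ρ0 := by
  by_cases h : i = k
  · subst h
    have h1 : (fun ρ => dmat W ρ i i)
        = fun ρ => ((((Smat W ρ)ᵀ * Smat W ρ) i i)⁻¹) := by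
      funext ρ; simp [dmat, Matrix.diagonal_apply_eq]
    have h2 : dmatDot W ρ0 i i
        = deriv (fun r => ((((Smat W r)ᵀ * Smat W r) i i)⁻¹)) ρ0 := by
      simp [dmatDot, Matrix.diagonal_apply_eq]
    rw [h1, h2]
    have hd : DifferentiableAt ℝ (fun r => ((((Smat W r)ᵀ * Smat W r) i i)⁻¹)) ρ0 := by
      rw [dfun_eq W hW i]
      have hpos : (0:ℝ) < 1 + ρ0 ^ 2 * ∑ k, (W k i) ^ 2 := by
        have h1 : (0:ℝ) ≤ ρ0 ^ 2 * ∑ k, (W k i) ^ 2 :=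
          mul_nonneg (sq_nonneg _) (Finset.sum_nonneg fun _ _ => sq_nonneg _)
        linarith
      exact (((differentiableAt_id.pow 2).mul_const _).const_add 1).inv (ne_of_gt hpos)
    exact hd.hasDerivAt
  · have h1 : (fun ρ => dmat W ρ i k) = fun _ => (0:ℝ) := by
      funext ρ; simp [dmat, Matrix.diagonal_apply_ne _ h]
    have h2 : dmatDot W ρ0 i k = 0 := by
      simp [dmatDot, Matrix.diagonal_apply_ne _ h]
    rw [h1, h2]; exact hasDerivAt_const _ _

lemma hasDerivAt_dotProduct {n' : Type*} [Fintype n'] {f g : ℝ → n' → ℝ}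
    {f' g' : n' → ℝ} {x : ℝ}
    (hf : ∀ i, HasDerivAt (fun ρ => f ρ i) (f' i) x)
    (hg : ∀ i, HasDerivAt (fun ρ => g ρ i) (g' i) x) :
    HasDerivAt (fun ρ => f ρ ⬝ᵥ g ρ) (f' ⬝ᵥ g x + f x ⬝ᵥ g') x := by
  simp only [dotProduct]
  rw [← Finset.sum_add_distrib]
  exact HasDerivAt.fun_sum fun i _ => (hf i).mul (hg i)

lemma hasDerivAt_mulVec {n' m' : Type*} [Fintype m'] {f : ℝ → Matrix n' m' ℝ}
    {v : ℝ → m' → ℝ} {f' : Matrix n' m' ℝ} {v' : m' → ℝ} {x : ℝ} (i : n')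
    (hf : ∀ k, HasDerivAt (fun ρ => f ρ i k) (f' i k) x)
    (hv : ∀ k, HasDerivAt (fun ρ => v ρ k) (v' k) x) :
    HasDerivAt (fun ρ => (f ρ *ᵥ v ρ) i) ((f' *ᵥ v x) i + (f x *ᵥ v') i) x := by
  simp only [Matrix.mulVec, dotProduct]
  rw [← Finset.sum_add_distrib]
  exact HasDerivAt.fun_sum fun k _ => (hf k).mul (hv k)

end Helpers

section Deriv

variable {N : ℕ} (W : Matrix (Fin N) (Fin N) ℝ)

/-- `A(ρ) = d(ρ) S(ρ)ᵀ`. -/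
noncomputable def Amat (ρ : ℝ) : Matrix (Fin N) (Fin N) ℝ :=
  dmat W ρ * (Smat W ρ)ᵀ

/-- Entrywise derivative of `A(ρ)` at `ρ0`. -/
noncomputable def Adot (ρ0 : ℝ) : Matrix (Fin N) (Fin N) ℝ :=
  dmatDot W ρ0 * (Smat W ρ0)ᵀ - dmat W ρ0 * Wᵀ

lemma hasDerivAt_Amat (hW : ∀ i, W i i = 0) (ρ0 : ℝ) (i k : Fin N) :
    HasDerivAt (fun ρ => Amat W ρ i k) (Adot W ρ0 i k) ρ0 := by
  have h1 : (fun ρ => Amat W ρ i k) = fun ρ => dmat W ρ i i * Smat W ρ k i := by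
    funext ρ
    simp [Amat, dmat, Matrix.diagonal_mul, Matrix.transpose_apply]
  have h2 : Adot W ρ0 i k
      = dmatDot W ρ0 i i * Smat W ρ0 k i + dmat W ρ0 i i * (-(W k i)) := by
    simp [Adot, dmat, dmatDot, Matrix.diagonal_mul, Matrix.sub_apply,
      Matrix.transpose_apply]
    ring
  rw [h1, h2]
  exact (hasDerivAt_dmat W hW ρ0 i i).mul (hasDerivAt_smat W ρ0 k i)

variable {p1 p2 : ℕ}

lemma hasDerivAt_resid (β0 : Fin p1 ⊕ Fin p2 → ℝ)
    (Xt : Matrix (Fin N) (Fin p1 ⊕ Fin p2) ℝ) (Yt : Fin N → ℝ) (ρ0 : ℝ) (k : Fin N) :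
    HasDerivAt (fun ρ => (Smat W ρ *ᵥ Yt - Xt *ᵥ β0) k) (-((W *ᵥ Yt) k)) ρ0 := by
  have h1 : (fun ρ => (Smat W ρ *ᵥ Yt - Xt *ᵥ β0) k)
      = fun ρ => (∑ l, Smat W ρ k l * Yt l) - (Xt *ᵥ β0) k := by
    funext ρ; simp [Matrix.mulVec, dotProduct]
  rw [h1]
  have : HasDerivAt (fun ρ => (∑ l, Smat W ρ k l * Yt l)) (∑ l, -(W k l) * Yt l) ρ0 :=
    HasDerivAt.fun_sum fun l _ => (hasDerivAt_smat W ρ0 k l).mul_const (Yt l)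
  have h2 : (∑ l, -(W k l) * Yt l) = -((W *ᵥ Yt) k) := by
    simp [Matrix.mulVec, dotProduct, Finset.sum_neg_distrib]
  rw [h2] at this
  exact this.sub_const _

/-- Inner `t`-derivative of the least squares objective. -/
lemma inner_deriv (β0 : Fin p1 ⊕ Fin p2 → ℝ) (j : Fin p1 ⊕ Fin p2)
    (Xt : Matrix (Fin N) (Fin p1 ⊕ Fin p2) ℝ) (Yt : Fin N → ℝ) (ρ : ℝ) :
    deriv (fun t : ℝ => lsObj W Xt Yt ρ
        (β0 + t • (Pi.single j 1 : (Fin p1 ⊕ Fin p2) → ℝ))) 0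
    = -2 * ((Amat W ρ *ᵥ (Smat W ρ *ᵥ Yt - Xt *ᵥ β0)) ⬝ᵥ
        (Amat W ρ *ᵥ (Xt *ᵥ (Pi.single j 1 : (Fin p1 ⊕ Fin p2) → ℝ)))) := by
  set A := Amat W ρ with hA
  set v0 := Smat W ρ *ᵥ Yt - Xt *ᵥ β0 with hv0
  set u := Xt *ᵥ (Pi.single j 1 : (Fin p1 ⊕ Fin p2) → ℝ) with hu
  set c0 := (A *ᵥ v0) ⬝ᵥ (A *ᵥ v0) with hc0
  set c1 := (A *ᵥ v0) ⬝ᵥ (A *ᵥ u) with hc1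
  set c2 := (A *ᵥ u) ⬝ᵥ (A *ᵥ u) with hc2
  have hfun : (fun t : ℝ => lsObj W Xt Yt ρ
      (β0 + t • (Pi.single j 1 : (Fin p1 ⊕ Fin p2) → ℝ)))
      = fun t : ℝ => c0 + t * (-2 * c1) + t ^ 2 * c2 := by
    funext t
    have harg : Smat W ρ *ᵥ Yt - Xt *ᵥ (β0 + t • (Pi.single j 1 : (Fin p1 ⊕ Fin p2) → ℝ))
        = v0 - t • u := by
      rw [Matrix.mulVec_add, Matrix.mulVec_smul, hv0]
      abel
    have hAv : A *ᵥ (v0 - t • u) = A *ᵥ v0 - t • (A *ᵥ u) := by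
      rw [Matrix.mulVec_sub, Matrix.mulVec_smul]
    have hcomm : (A *ᵥ u) ⬝ᵥ (A *ᵥ v0) = c1 := dotProduct_comm _ _
    have hls : lsObj W Xt Yt ρ (β0 + t • (Pi.single j 1 : (Fin p1 ⊕ Fin p2) → ℝ))
        = (A *ᵥ (v0 - t • u)) ⬝ᵥ (A *ᵥ (v0 - t • u)) := by
      unfold lsObj
      rw [harg, hA, Amat]
    rw [hls, hAv, sub_dotProduct, dotProduct_sub, dotProduct_sub, smul_dotProduct,
      smul_dotProduct, dotProduct_smul, dotProduct_smul, smul_eq_mul, smul_eq_mul,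
      hcomm, ← hc0, ← hc1, ← hc2]
    simp only [smul_eq_mul]
    ring
  rw [hfun]
  have hd : HasDerivAt (fun t : ℝ => c0 + t * (-2 * c1) + t ^ 2 * c2)
      (-2 * c1) 0 := by
    have h1 : HasDerivAt (fun t : ℝ => t * (-2 * c1)) (-2 * c1) 0 := by
      simpa using (hasDerivAt_id (0:ℝ)).mul_const (-2 * c1)
    have h2 : HasDerivAt (fun t : ℝ => t ^ 2 * c2) 0 0 := by
      simpa using (hasDerivAt_pow 2 (0:ℝ)).mul_const c2
    simpa using (h1.const_add c0).fun_add h2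
  rw [hd.deriv]

/-- Outer `ρ`-derivative. -/
lemma outer_deriv (hW : ∀ i, W i i = 0) (β0 : Fin p1 ⊕ Fin p2 → ℝ)
    (j : Fin p1 ⊕ Fin p2) (Xt : Matrix (Fin N) (Fin p1 ⊕ Fin p2) ℝ)
    (Yt : Fin N → ℝ) (ρ0 : ℝ) :
    deriv (fun ρ => -2 * ((Amat W ρ *ᵥ (Smat W ρ *ᵥ Yt - Xt *ᵥ β0)) ⬝ᵥ
        (Amat W ρ *ᵥ (Xt *ᵥ (Pi.single j 1 : (Fin p1 ⊕ Fin p2) → ℝ))))) ρ0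
    = -2 * (((Adot W ρ0 *ᵥ (Smat W ρ0 *ᵥ Yt - Xt *ᵥ β0)
          + Amat W ρ0 *ᵥ (-(W *ᵥ Yt))) ⬝ᵥ
            (Amat W ρ0 *ᵥ (Xt *ᵥ (Pi.single j 1 : (Fin p1 ⊕ Fin p2) → ℝ))))
        + ((Amat W ρ0 *ᵥ (Smat W ρ0 *ᵥ Yt - Xt *ᵥ β0)) ⬝ᵥ
            (Adot W ρ0 *ᵥ (Xt *ᵥ (Pi.single j 1 : (Fin p1 ⊕ Fin p2) → ℝ))))) := by
  set u := Xt *ᵥ (Pi.single j 1 : (Fin p1 ⊕ Fin p2) → ℝ) with hu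
  have hf : ∀ i : Fin N, HasDerivAt
      (fun ρ => (Amat W ρ *ᵥ (Smat W ρ *ᵥ Yt - Xt *ᵥ β0)) i)
      ((Adot W ρ0 *ᵥ (Smat W ρ0 *ᵥ Yt - Xt *ᵥ β0)
        + Amat W ρ0 *ᵥ (-(W *ᵥ Yt))) i) ρ0 := by
    intro i
    have := hasDerivAt_mulVec (f := fun ρ => Amat W ρ)
      (v := fun ρ => Smat W ρ *ᵥ Yt - Xt *ᵥ β0)
      (f' := Adot W ρ0) (v' := -(W *ᵥ Yt)) i
      (fun k => hasDerivAt_Amat W hW ρ0 i k)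
      (fun k => hasDerivAt_resid W β0 Xt Yt ρ0 k)
    simpa [Pi.add_apply] using this
  have hg : ∀ i : Fin N, HasDerivAt (fun ρ => (Amat W ρ *ᵥ u) i)
      ((Adot W ρ0 *ᵥ u) i) ρ0 := by
    intro i
    have := hasDerivAt_mulVec (f := fun ρ => Amat W ρ) (v := fun _ => u)
      (f' := Adot W ρ0) (v' := 0) i
      (fun k => hasDerivAt_Amat W hW ρ0 i k)
      (fun k => hasDerivAt_const ρ0 (u k))
    simpa using this
  have := (hasDerivAt_dotProduct hf hg).const_mul (-2 : ℝ)
  simpa [Matrix.mulVec_zero, add_zero] using this.deriv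

end Deriv

section Integrals

variable {Ωs : Type*} [MeasurableSpace Ωs] {μ : Measure Ωs} [IsProbabilityMeasure μ]
variable {ι' : Type*} [Fintype ι'] {Z : ι' → Ωs → ℝ}

lemma integrable_Z (hmom : ∀ z, MemLp (Z z) 4 μ) (z : ι') : Integrable (Z z) μ :=
  (hmom z).integrable (by norm_num)

lemma memL2_Z (hmom : ∀ z, MemLp (Z z) 4 μ) (z : ι') : MemLp (Z z) 2 μ :=
  (hmom z).mono_exponent (by norm_num)

lemma integrable_ZZ (hindep : iIndepFun Z μ)
    (hmom : ∀ z, MemLp (Z z) 4 μ) (z z' : ι') :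
    Integrable (fun ω => Z z ω * Z z' ω) μ := by
  by_cases h : z = z'
  · subst h
    simpa [sq] using (memL2_Z hmom z).integrable_sq
  · exact (hindep.indepFun h).integrable_mul (integrable_Z hmom z) (integrable_Z hmom z')

lemma int_ZZ_ne (hindep : iIndepFun Z μ)
    (hmom : ∀ z, MemLp (Z z) 4 μ) (hmean : ∀ z, ∫ ω, Z z ω ∂μ = 0)
    {z z' : ι'} (h : z ≠ z') :
    ∫ ω, Z z ω * Z z' ω ∂μ = 0 := by
  have := (hindep.indepFun h).integral_mul_eq_mul_integral
    (integrable_Z hmom z).aestronglyMeasurable (integrable_Z hmom z').aestronglyMeasurable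
  calc ∫ ω, Z z ω * Z z' ω ∂μ = ∫ ω, (Z z * Z z') ω ∂μ := rfl
    _ = (∫ ω, Z z ω ∂μ) * ∫ ω, Z z' ω ∂μ := this
    _ = 0 := by rw [hmean z, hmean z']; ring

lemma int_lin (hmom : ∀ z, MemLp (Z z) 4 μ) (hmean : ∀ z, ∫ ω, Z z ω ∂μ = 0)
    (c : ι' → ℝ) :
    ∫ ω, ∑ z, c z * Z z ω ∂μ = 0 := by
  rw [integral_finset_sum _ fun z _ => (integrable_Z hmom z).const_mul (c z)]
  simp only [integral_const_mul]
  simp [hmean]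

lemma integrable_lin (hmom : ∀ z, MemLp (Z z) 4 μ) (c : ι' → ℝ) :
    Integrable (fun ω => ∑ z, c z * Z z ω) μ :=
  integrable_finset_sum _ fun z _ => (integrable_Z hmom z).const_mul (c z)

lemma int_quad (hindep : iIndepFun Z μ)
    (hmom : ∀ z, MemLp (Z z) 4 μ) (hmean : ∀ z, ∫ ω, Z z ω ∂μ = 0)
    (G : Matrix ι' ι' ℝ) :
    ∫ ω, ∑ z, ∑ z', G z z' * (Z z ω * Z z' ω) ∂μ
      = ∑ z, G z z * ∫ ω, (Z z ω) ^ 2 ∂μ := by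
  have hint : ∀ z z' : ι', Integrable (fun ω => G z z' * (Z z ω * Z z' ω)) μ :=
    fun z z' => (integrable_ZZ hindep hmom z z').const_mul _
  rw [integral_finset_sum _ fun z _ =>
    integrable_finset_sum _ fun z' _ => hint z z']
  have : ∀ z : ι', ∫ ω, ∑ z', G z z' * (Z z ω * Z z' ω) ∂μ
      = G z z * ∫ ω, (Z z ω) ^ 2 ∂μ := by
    intro z
    rw [integral_finset_sum _ fun z' _ => hint z z']
    rw [Finset.sum_eq_single z]
    · rw [integral_const_mul]
      congr 1
      apply integral_congr_ae
      filter_upwards with ω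
      ring
    · intro z' _ hz'
      rw [integral_const_mul, int_ZZ_ne hindep hmom hmean (Ne.symm hz'), mul_zero]
    · intro h; exact absurd (Finset.mem_univ z) h
  exact Finset.sum_congr rfl fun z _ => this z

lemma integrable_quad (hindep : iIndepFun Z μ)
    (hmom : ∀ z, MemLp (Z z) 4 μ) (G : Matrix ι' ι' ℝ) :
    Integrable (fun ω => ∑ z, ∑ z', G z z' * (Z z ω * Z z' ω)) μ :=
  integrable_finset_sum _ fun z _ => integrable_finset_sum _ fun z' _ =>
    (integrable_ZZ hindep hmom z z').const_mul _

end Integrals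

section Affine

variable {Ωs : Type*} [MeasurableSpace Ωs] {μ : Measure Ωs} [IsProbabilityMeasure μ]
variable {ι' : Type*} [Fintype ι'] {Z : ι' → Ωs → ℝ}
variable {n : Type*} [Fintype n]

lemma dot_expand (M M' : Matrix n ι' ℝ) (Zv : ι' → ℝ) :
    (M *ᵥ Zv) ⬝ᵥ (M' *ᵥ Zv) = ∑ z, ∑ z', (Mᵀ * M') z z' * (Zv z * Zv z') := by
  have hswap : ∀ f : n → ι' → ι' → ℝ,
      ∑ i, ∑ z, ∑ z', f i z z' = ∑ z, ∑ z', ∑ i, f i z z' := by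
    intro f
    rw [Finset.sum_comm]
    exact Finset.sum_congr rfl fun z _ => Finset.sum_comm
  calc (M *ᵥ Zv) ⬝ᵥ (M' *ᵥ Zv)
      = ∑ i, ∑ z', ∑ z, (M i z * Zv z) * (M' i z' * Zv z') := by
        simp only [dotProduct, Matrix.mulVec, Finset.sum_mul, Finset.mul_sum]
    _ = ∑ i, ∑ z, ∑ z', (M i z * Zv z) * (M' i z' * Zv z') :=
        Finset.sum_congr rfl fun i _ => Finset.sum_comm
    _ = ∑ z, ∑ z', ∑ i, (M i z * Zv z) * (M' i z' * Zv z') := hswap _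
    _ = ∑ z, ∑ z', (∑ i, Mᵀ z i * M' i z') * (Zv z * Zv z') := by
        refine Finset.sum_congr rfl fun z _ => Finset.sum_congr rfl fun z' _ => ?_
        rw [Finset.sum_mul]
        exact Finset.sum_congr rfl fun i _ => by
          rw [Matrix.transpose_apply]; ring
    _ = ∑ z, ∑ z', (Mᵀ * M') z z' * (Zv z * Zv z') := by
        simp [Matrix.mul_apply]

lemma dot_lin (a0 : n → ℝ) (M : Matrix n ι' ℝ) (Zv : ι' → ℝ) :
    a0 ⬝ᵥ (M *ᵥ Zv) = ∑ z, (Matrix.vecMul a0 M) z * Zv z := by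
  rw [Matrix.dotProduct_mulVec]; rfl

lemma affine_pointwise (B C : Matrix n ι' ℝ) (a0 g0 : n → ℝ) (Zv : ι' → ℝ) :
    (a0 + B *ᵥ Zv) ⬝ᵥ (g0 + C *ᵥ Zv)
      = a0 ⬝ᵥ g0 + ((∑ z, (Matrix.vecMul a0 C) z * Zv z)
        + (∑ z, (Matrix.vecMul g0 B) z * Zv z)
        + ∑ z, ∑ z', (Bᵀ * C) z z' * (Zv z * Zv z')) := by
  rw [add_dotProduct, dotProduct_add, dotProduct_add, dot_expand,
    dot_lin, dotProduct_comm (B *ᵥ Zv) g0, dot_lin]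
  ring

lemma int_affine (hindep : iIndepFun Z μ)
    (hmom : ∀ z, MemLp (Z z) 4 μ) (hmean : ∀ z, ∫ ω, Z z ω ∂μ = 0)
    (B C : Matrix n ι' ℝ) (a0 g0 : n → ℝ) :
    ∫ ω, (a0 + B *ᵥ (fun z => Z z ω)) ⬝ᵥ (g0 + C *ᵥ (fun z => Z z ω)) ∂μ
      = a0 ⬝ᵥ g0 + ∑ z, (Bᵀ * C) z z * ∫ ω, (Z z ω) ^ 2 ∂μ := by
  have h1 : ∫ ω, (a0 + B *ᵥ (fun z => Z z ω)) ⬝ᵥ (g0 + C *ᵥ (fun z => Z z ω)) ∂μ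
      = ∫ ω, (a0 ⬝ᵥ g0 + ((∑ z, (Matrix.vecMul a0 C) z * Z z ω)
        + (∑ z, (Matrix.vecMul g0 B) z * Z z ω)
        + ∑ z, ∑ z', (Bᵀ * C) z z' * (Z z ω * Z z' ω))) ∂μ := by
    congr 1; funext ω; exact affine_pointwise B C a0 g0 (fun z => Z z ω)
  have Ia : Integrable (fun ω => ∑ z, (Matrix.vecMul a0 C) z * Z z ω) μ :=
    integrable_lin hmom _
  have Ib : Integrable (fun ω => ∑ z, (Matrix.vecMul g0 B) z * Z z ω) μ :=
    integrable_lin hmom _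
  have Ic : Integrable (fun ω => ∑ z, ∑ z', (Bᵀ * C) z z' * (Z z ω * Z z' ω)) μ :=
    integrable_quad hindep hmom _
  have Iab : Integrable (fun ω => (∑ z, (Matrix.vecMul a0 C) z * Z z ω)
      + ∑ z, (Matrix.vecMul g0 B) z * Z z ω) μ := Ia.add Ib
  have Iabc : Integrable (fun ω => ((∑ z, (Matrix.vecMul a0 C) z * Z z ω)
      + ∑ z, (Matrix.vecMul g0 B) z * Z z ω)
      + ∑ z, ∑ z', (Bᵀ * C) z z' * (Z z ω * Z z' ω)) μ := Iab.add Ic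
  rw [h1, integral_add (integrable_const _) Iabc, integral_add Iab Ic,
    integral_add Ia Ib, int_lin hmom hmean, int_lin hmom hmean,
    int_quad hindep hmom hmean]
  simp

lemma integrable_affine (hindep : iIndepFun Z μ)
    (hmom : ∀ z, MemLp (Z z) 4 μ)
    (B C : Matrix n ι' ℝ) (a0 g0 : n → ℝ) :
    Integrable (fun ω => (a0 + B *ᵥ (fun z => Z z ω)) ⬝ᵥ (g0 + C *ᵥ (fun z => Z z ω))) μ := by
  have h1 : (fun ω => (a0 + B *ᵥ (fun z => Z z ω)) ⬝ᵥ (g0 + C *ᵥ (fun z => Z z ω)))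
      = fun ω => (a0 ⬝ᵥ g0 + ((∑ z, (Matrix.vecMul a0 C) z * Z z ω)
        + (∑ z, (Matrix.vecMul g0 B) z * Z z ω)
        + ∑ z, ∑ z', (Bᵀ * C) z z' * (Z z ω * Z z' ω))) := by
    funext ω; exact affine_pointwise B C a0 g0 (fun z => Z z ω)
  rw [h1]
  exact (integrable_const _).add (((integrable_lin hmom _).add (integrable_lin hmom _)).add
    (integrable_quad hindep hmom _))

end Affine

section Embedding

variable {N p1 p2 : ℕ}

/-- Embedding matrix extracting `E` from the joint noise vector. -/
noncomputable def MEmat (N p2 : ℕ) :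
    Matrix (Fin N) (Fin N ⊕ Fin N ⊕ Fin N × Fin p2) ℝ :=
  Matrix.of fun a z => if z = Sum.inl a then 1 else 0

/-- Embedding matrix extracting `ε` from the joint noise vector. -/
noncomputable def Mepsmat (N p2 : ℕ) :
    Matrix (Fin N) (Fin N ⊕ Fin N ⊕ Fin N × Fin p2) ℝ :=
  Matrix.of fun a z => if z = Sum.inr (Sum.inl a) then 1 else 0

/-- Matrix representing `ω ↦ 𝔈ω *ᵥ w` as a linear map of the joint noise vector. -/
noncomputable def MXmat (N : ℕ) {p1 p2 : ℕ} (w : Fin p1 ⊕ Fin p2 → ℝ) :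
    Matrix (Fin N) (Fin N ⊕ Fin N ⊕ Fin N × Fin p2) ℝ :=
  Matrix.of fun a z => Sum.elim (fun _ => (0:ℝ))
    (Sum.elim (fun _ => (0:ℝ)) (fun q => if q.1 = a then w (Sum.inr q.2) else 0)) z

lemma MEmat_mulVec (Zv : (Fin N ⊕ Fin N ⊕ Fin N × Fin p2) → ℝ) :
    MEmat N p2 *ᵥ Zv = fun a => Zv (Sum.inl a) := by
  funext a
  simp [MEmat, Matrix.mulVec, dotProduct, ite_mul]

lemma Mepsmat_mulVec (Zv : (Fin N ⊕ Fin N ⊕ Fin N × Fin p2) → ℝ) :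
    Mepsmat N p2 *ᵥ Zv = fun a => Zv (Sum.inr (Sum.inl a)) := by
  funext a
  simp [Mepsmat, Matrix.mulVec, dotProduct, ite_mul]

lemma MXmat_mulVec (w : Fin p1 ⊕ Fin p2 → ℝ)
    (Zv : (Fin N ⊕ Fin N ⊕ Fin N × Fin p2) → ℝ) :
    MXmat N w *ᵥ Zv = fun a => ∑ m, w (Sum.inr m) * Zv (Sum.inr (Sum.inr (a, m))) := by
  funext a
  simp only [MXmat, Matrix.mulVec, dotProduct, Matrix.of_apply]
  rw [Fintype.sum_sum_type]
  simp only [Sum.elim_inl, Sum.elim_inr, zero_mul, Finset.sum_const_zero, zero_add]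
  rw [Fintype.sum_sum_type]
  simp only [Sum.elim_inl, Sum.elim_inr, zero_mul, Finset.sum_const_zero, zero_add]
  rw [Fintype.sum_prod_type]
  rw [Finset.sum_eq_single a]
  · exact Finset.sum_congr rfl fun m _ => by simp
  · intro b _ hb
    simp [if_neg hb]
  · intro h; exact absurd (Finset.mem_univ a) h

lemma Xobs_mulVec (X : Matrix (Fin N) (Fin p1 ⊕ Fin p2) ℝ)
    (ex : Fin N → Fin p2 → ℝ) (w : Fin p1 ⊕ Fin p2 → ℝ) :
    Xobs X ex *ᵥ w = X *ᵥ w + fun a => ∑ m, w (Sum.inr m) * ex a m := by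
  funext a
  simp only [Xobs, Matrix.add_mulVec, Pi.add_apply]
  congr 1
  simp only [Matrix.mulVec, dotProduct, Matrix.of_apply]
  rw [Fintype.sum_sum_type]
  simp only [Sum.elim_inl, Sum.elim_inr, zero_mul, Finset.sum_const_zero, zero_add]
  exact Finset.sum_congr rfl fun m _ => mul_comm _ _

lemma mul_MXmat_Ex (M : Matrix (Fin N) (Fin N) ℝ) (w : Fin p1 ⊕ Fin p2 → ℝ)
    (i b : Fin N) (m : Fin p2) :
    (M * MXmat N w) i (Sum.inr (Sum.inr (b, m))) = M i b * w (Sum.inr m) := by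
  rw [Matrix.mul_apply]
  rw [Finset.sum_eq_single b]
  · simp [MXmat]
  · intro c _ hc; simp [MXmat, Ne.symm hc]
  · intro h; exact absurd (Finset.mem_univ b) h

lemma mul_MXmat_E0 (M : Matrix (Fin N) (Fin N) ℝ) (w : Fin p1 ⊕ Fin p2 → ℝ)
    (i : Fin N) (c : Fin N) :
    (M * MXmat N w) i (Sum.inl c) = 0 := by
  rw [Matrix.mul_apply]; simp [MXmat]

lemma mul_MXmat_eps0 (M : Matrix (Fin N) (Fin N) ℝ) (w : Fin p1 ⊕ Fin p2 → ℝ)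
    (i : Fin N) (c : Fin N) :
    (M * MXmat N w) i (Sum.inr (Sum.inl c)) = 0 := by
  rw [Matrix.mul_apply]; simp [MXmat]

lemma mul_MEmat_Ex0 (M : Matrix (Fin N) (Fin N) ℝ) (i : Fin N)
    (q : Fin N × Fin p2) :
    (M * MEmat N p2) i (Sum.inr (Sum.inr q)) = 0 := by
  rw [Matrix.mul_apply]; simp [MEmat]

lemma mul_Mepsmat_Ex0 (M : Matrix (Fin N) (Fin N) ℝ) (i : Fin N)
    (q : Fin N × Fin p2) :
    (M * Mepsmat N p2) i (Sum.inr (Sum.inr q)) = 0 := by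
  rw [Matrix.mul_apply]; simp [Mepsmat]

end Embedding

section MainAux

variable {N p1 p2 : ℕ}

lemma full_deriv (W : Matrix (Fin N) (Fin N) ℝ) (hW : ∀ i, W i i = 0)
    (β0 : Fin p1 ⊕ Fin p2 → ℝ) (j : Fin p1 ⊕ Fin p2)
    (Xt : Matrix (Fin N) (Fin p1 ⊕ Fin p2) ℝ) (Yt : Fin N → ℝ) (ρ0 : ℝ) :
    deriv (fun ρ => deriv (fun t : ℝ => lsObj W Xt Yt ρ
        (β0 + t • (Pi.single j 1 : (Fin p1 ⊕ Fin p2) → ℝ))) 0) ρ0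
    = -2 * (((Adot W ρ0 *ᵥ (Smat W ρ0 *ᵥ Yt - Xt *ᵥ β0)
          + Amat W ρ0 *ᵥ (-(W *ᵥ Yt))) ⬝ᵥ
            (Amat W ρ0 *ᵥ (Xt *ᵥ (Pi.single j 1 : (Fin p1 ⊕ Fin p2) → ℝ))))
        + ((Amat W ρ0 *ᵥ (Smat W ρ0 *ᵥ Yt - Xt *ᵥ β0)) ⬝ᵥ
            (Adot W ρ0 *ᵥ (Xt *ᵥ (Pi.single j 1 : (Fin p1 ⊕ Fin p2) → ℝ))))) := by
  have h : (fun ρ => deriv (fun t : ℝ => lsObj W Xt Yt ρ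
      (β0 + t • (Pi.single j 1 : (Fin p1 ⊕ Fin p2) → ℝ))) 0)
      = fun ρ => -2 * ((Amat W ρ *ᵥ (Smat W ρ *ᵥ Yt - Xt *ᵥ β0)) ⬝ᵥ
          (Amat W ρ *ᵥ (Xt *ᵥ (Pi.single j 1 : (Fin p1 ⊕ Fin p2) → ℝ)))) :=
    funext fun ρ => inner_deriv W β0 j Xt Yt ρ
  rw [h]
  exact outer_deriv W hW β0 j Xt Yt ρ0

lemma S_sum (P Q : Matrix (Fin N) (Fin N) ℝ) (βv w : Fin p1 ⊕ Fin p2 → ℝ)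
    (V : (Fin N ⊕ Fin N ⊕ Fin N × Fin p2) → ℝ) (lx : ℝ)
    (hV : ∀ b m, V (Sum.inr (Sum.inr (b, m))) = lx)
    (B C : Matrix (Fin N) (Fin N ⊕ Fin N ⊕ Fin N × Fin p2) ℝ)
    (hC0a : ∀ i c, C i (Sum.inl c) = 0)
    (hC0b : ∀ i c, C i (Sum.inr (Sum.inl c)) = 0)
    (hCx : ∀ i b m, C i (Sum.inr (Sum.inr (b, m))) = Q i b * w (Sum.inr m))
    (hBx : ∀ i b m, B i (Sum.inr (Sum.inr (b, m))) = -(P i b * βv (Sum.inr m))) :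
    ∑ z, (Bᵀ * C) z z * V z
      = -(lx * (∑ b, ∑ i, P i b * Q i b) * ∑ m, βv (Sum.inr m) * w (Sum.inr m)) := by
  rw [Fintype.sum_sum_type]
  have h0a : ∀ c : Fin N, (Bᵀ * C) (Sum.inl c) (Sum.inl c) * V (Sum.inl c) = 0 := by
    intro c
    rw [Matrix.mul_apply]
    simp [Matrix.transpose_apply, hC0a]
  have h0b : ∀ c : Fin N,
      (Bᵀ * C) (Sum.inr (Sum.inl c)) (Sum.inr (Sum.inl c)) * V (Sum.inr (Sum.inl c)) = 0 := by
    intro c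
    rw [Matrix.mul_apply]
    simp [Matrix.transpose_apply, hC0b]
  have hx : ∀ (b : Fin N) (m : Fin p2),
      (Bᵀ * C) (Sum.inr (Sum.inr (b, m))) (Sum.inr (Sum.inr (b, m)))
        * V (Sum.inr (Sum.inr (b, m)))
      = (∑ i, P i b * Q i b) * (βv (Sum.inr m) * w (Sum.inr m)) * (-lx) := by
    intro b m
    rw [Matrix.mul_apply, hV b m]
    have : ∀ i : Fin N, Bᵀ (Sum.inr (Sum.inr (b, m))) i * C i (Sum.inr (Sum.inr (b, m)))
        = (P i b * Q i b) * (-(βv (Sum.inr m) * w (Sum.inr m))) := by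
      intro i
      rw [Matrix.transpose_apply, hBx, hCx]
      ring
    rw [Finset.sum_congr rfl fun i _ => this i, ← Finset.sum_mul]
    ring
  rw [Finset.sum_congr rfl fun c _ => h0a c, Finset.sum_const_zero, zero_add,
    Fintype.sum_sum_type,
    Finset.sum_congr rfl fun c _ => h0b c, Finset.sum_const_zero, zero_add,
    Fintype.sum_prod_type,
    Finset.sum_congr rfl (fun b _ => Finset.sum_congr rfl fun m _ => hx b m)]
  have hb : ∀ b : Fin N, ∑ m : Fin p2,
      (∑ i, P i b * Q i b) * (βv (Sum.inr m) * w (Sum.inr m)) * (-lx)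
      = (∑ i, P i b * Q i b) * ((-lx) * ∑ m, βv (Sum.inr m) * w (Sum.inr m)) := by
    intro b
    calc ∑ m : Fin p2, (∑ i, P i b * Q i b) * (βv (Sum.inr m) * w (Sum.inr m)) * (-lx)
        = ∑ m : Fin p2, ((∑ i, P i b * Q i b) * (-lx)) * (βv (Sum.inr m) * w (Sum.inr m)) :=
          Finset.sum_congr rfl fun m _ => by ring
      _ = ((∑ i, P i b * Q i b) * (-lx)) * ∑ m, βv (Sum.inr m) * w (Sum.inr m) :=
          (Finset.mul_sum _ _ _).symm
      _ = (∑ i, P i b * Q i b) * ((-lx) * ∑ m, βv (Sum.inr m) * w (Sum.inr m)) := by ring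
  rw [Finset.sum_congr rfl fun b _ => hb b, ← Finset.sum_mul]
  ring

end MainAux

set_option maxHeartbeats 2000000 in
theorem statement_15
    {Ωs : Type*} [MeasurableSpace Ωs] (μ : Measure Ωs) [IsProbabilityMeasure μ]
    (N p1 p2 : ℕ) (hN : 0 < N) (hp1 : 0 < p1) (hp2 : 0 < p2)
    (W : Matrix (Fin N) (Fin N) ℝ) (hW : ∀ i, W i i = 0)
    (X : Matrix (Fin N) (Fin p1 ⊕ Fin p2) ℝ)
    (ρ0 : ℝ) (β0 : Fin p1 ⊕ Fin p2 → ℝ) (σ02 lam2 lamx2 : ℝ)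
    (hσ : 0 < σ02) (hlam : 0 < lam2) (hlamx : 0 < lamx2)
    (hS0 : 0 < (Smat W ρ0).det)
    (E ε : Ωs → Fin N → ℝ) (Ex : Ωs → Fin N → Fin p2 → ℝ)
    (hindep : iIndepFun (noiseFam E ε Ex) μ)
    (hmom : ∀ z, MemLp (noiseFam E ε Ex z) 4 μ)
    (hmean : ∀ z, ∫ ω, noiseFam E ε Ex z ω ∂μ = 0)
    (hEvar : ∀ i, ∫ ω, (E ω i) ^ 2 ∂μ = σ02)
    (hepsvar : ∀ i, ∫ ω, (ε ω i) ^ 2 ∂μ = lam2)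
    (hExvar : ∀ i j, ∫ ω, (Ex ω i j) ^ 2 ∂μ = lamx2) :
    ∀ j : Fin p1 ⊕ Fin p2,
      (∫ ω, deriv (fun ρ => deriv (fun t : ℝ =>
            lsObj W (Xobs X (Ex ω)) (Yobs W ρ0 X β0 (E ω) (ε ω)) ρ
              (β0 + t • (Pi.single j 1 : (Fin p1 ⊕ Fin p2) → ℝ))) 0) ρ0 ∂μ)
        - (∫ ω, deriv (fun ρ => deriv (fun t : ℝ =>
            lsObj W X (Ytrue W ρ0 X β0 (E ω)) ρ
              (β0 + t • (Pi.single j 1 : (Fin p1 ⊕ Fin p2) → ℝ))) 0) ρ0 ∂μ)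
        = Sum.elim (fun _ => (0 : ℝ))
            (fun k =>
              4 * lamx2 *
                  Matrix.trace (Smat W ρ0 * dmat W ρ0 * dmatDot W ρ0 * (Smat W ρ0)ᵀ) *
                  β0 (Sum.inr k)
                - 4 * lamx2 *
                    Matrix.trace (W * (dmat W ρ0 * dmat W ρ0) * (Smat W ρ0)ᵀ) *
                    β0 (Sum.inr k)) j
  := by
  intro j
  have hdet : IsUnit (Smat W ρ0).det := isUnit_iff_ne_zero.mpr (ne_of_gt hS0)
  have hcancel : ∀ v : Fin N → ℝ, Smat W ρ0 *ᵥ ((Smat W ρ0)⁻¹ *ᵥ v) = v := by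
    intro v
    rw [Matrix.mulVec_mulVec, Matrix.mul_nonsing_inv _ hdet, Matrix.one_mulVec]
  obtain ⟨A0, hA0⟩ : ∃ A, A = Amat W ρ0 := ⟨_, rfl⟩
  obtain ⟨Ad, hAd⟩ : ∃ A, A = Adot W ρ0 := ⟨_, rfl⟩
  obtain ⟨ybar, hybar⟩ : ∃ y, y = (Smat W ρ0)⁻¹ *ᵥ (X *ᵥ β0) := ⟨_, rfl⟩
  obtain ⟨u0, hu0⟩ : ∃ u, u = X *ᵥ (Pi.single j 1 : (Fin p1 ⊕ Fin p2) → ℝ) := ⟨_, rfl⟩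
  obtain ⟨LP, hLP⟩ : ∃ L, L = MEmat N p2 + Smat W ρ0 * Mepsmat N p2 - MXmat N β0 :=
    ⟨_, rfl⟩
  obtain ⟨LY, hLY⟩ : ∃ L, L = (Smat W ρ0)⁻¹ * MEmat N p2 + Mepsmat N p2 := ⟨_, rfl⟩
  obtain ⟨LYt, hLYt⟩ : ∃ L, L = (Smat W ρ0)⁻¹ * MEmat N p2 := ⟨_, rfl⟩
  obtain ⟨Lu, hLu⟩ : ∃ L, L = MXmat N (Pi.single j 1 : (Fin p1 ⊕ Fin p2) → ℝ) := ⟨_, rfl⟩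
  obtain ⟨B1, hB1⟩ : ∃ B, B = Ad * LP - (A0 * W) * LY := ⟨_, rfl⟩
  obtain ⟨C1, hC1⟩ : ∃ C, C = A0 * Lu := ⟨_, rfl⟩
  obtain ⟨B2, hB2⟩ : ∃ B, B = A0 * LP := ⟨_, rfl⟩
  obtain ⟨C2, hC2⟩ : ∃ C, C = Ad * Lu := ⟨_, rfl⟩
  obtain ⟨B1t, hB1t⟩ : ∃ B, B = Ad * MEmat N p2 - (A0 * W) * LYt := ⟨_, rfl⟩
  obtain ⟨B2t, hB2t⟩ : ∃ B, B = A0 * MEmat N p2 := ⟨_, rfl⟩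
  obtain ⟨a1, ha1⟩ : ∃ a, a = -((A0 * W) *ᵥ ybar) := ⟨_, rfl⟩
  obtain ⟨g1, hg1⟩ : ∃ g, g = A0 *ᵥ u0 := ⟨_, rfl⟩
  obtain ⟨g2, hg2⟩ : ∃ g, g = Ad *ᵥ u0 := ⟨_, rfl⟩
  -- affine representations
  have hYobsA : ∀ ω, Yobs W ρ0 X β0 (E ω) (ε ω)
      = ybar + LY *ᵥ (fun z => noiseFam E ε Ex z ω) := by
    intro ω
    rw [hLY, Matrix.add_mulVec, ← Matrix.mulVec_mulVec, MEmat_mulVec, Mepsmat_mulVec]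
    show Yobs W ρ0 X β0 (E ω) (ε ω) = ybar + ((Smat W ρ0)⁻¹ *ᵥ E ω + ε ω)
    unfold Yobs
    rw [Matrix.mulVec_add, hybar]
    abel
  have hYtrueA : ∀ ω, Ytrue W ρ0 X β0 (E ω)
      = ybar + LYt *ᵥ (fun z => noiseFam E ε Ex z ω) := by
    intro ω
    rw [hLYt, ← Matrix.mulVec_mulVec, MEmat_mulVec]
    show Ytrue W ρ0 X β0 (E ω) = ybar + (Smat W ρ0)⁻¹ *ᵥ E ω
    unfold Ytrue
    rw [Matrix.mulVec_add, hybar]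
  have hv00n : ∀ ω, Smat W ρ0 *ᵥ Yobs W ρ0 X β0 (E ω) (ε ω) - Xobs X (Ex ω) *ᵥ β0
      = LP *ᵥ (fun z => noiseFam E ε Ex z ω) := by
    intro ω
    rw [hLP, Matrix.sub_mulVec, Matrix.add_mulVec, ← Matrix.mulVec_mulVec,
      MEmat_mulVec, Mepsmat_mulVec, MXmat_mulVec]
    show Smat W ρ0 *ᵥ Yobs W ρ0 X β0 (E ω) (ε ω) - Xobs X (Ex ω) *ᵥ β0
      = E ω + Smat W ρ0 *ᵥ ε ω - fun a => ∑ m, β0 (Sum.inr m) * Ex ω a m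
    unfold Yobs
    rw [Matrix.mulVec_add (Smat W ρ0) ((Smat W ρ0)⁻¹ *ᵥ (X *ᵥ β0 + E ω)) (ε ω),
      hcancel, Xobs_mulVec]
    abel
  have hv00t : ∀ ω, Smat W ρ0 *ᵥ Ytrue W ρ0 X β0 (E ω) - X *ᵥ β0
      = MEmat N p2 *ᵥ (fun z => noiseFam E ε Ex z ω) := by
    intro ω
    rw [MEmat_mulVec]
    show Smat W ρ0 *ᵥ Ytrue W ρ0 X β0 (E ω) - X *ᵥ β0 = E ω
    unfold Ytrue
    rw [hcancel]
    abel
  have huA : ∀ ω, Xobs X (Ex ω) *ᵥ (Pi.single j 1 : (Fin p1 ⊕ Fin p2) → ℝ)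
      = u0 + Lu *ᵥ (fun z => noiseFam E ε Ex z ω) := by
    intro ω
    rw [hLu, MXmat_mulVec]
    show Xobs X (Ex ω) *ᵥ (Pi.single j 1 : (Fin p1 ⊕ Fin p2) → ℝ)
      = u0 + fun a => ∑ m, (Pi.single j 1 : (Fin p1 ⊕ Fin p2) → ℝ) (Sum.inr m) * Ex ω a m
    rw [Xobs_mulVec, hu0]
  -- affine form of the two integrands
  have hDn : ∀ ω, deriv (fun ρ => deriv (fun t : ℝ =>
        lsObj W (Xobs X (Ex ω)) (Yobs W ρ0 X β0 (E ω) (ε ω)) ρ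
          (β0 + t • (Pi.single j 1 : (Fin p1 ⊕ Fin p2) → ℝ))) 0) ρ0
      = -2 * (((a1 + B1 *ᵥ (fun z => noiseFam E ε Ex z ω)) ⬝ᵥ
            (g1 + C1 *ᵥ (fun z => noiseFam E ε Ex z ω)))
          + (((0 : Fin N → ℝ) + B2 *ᵥ (fun z => noiseFam E ε Ex z ω)) ⬝ᵥ
            (g2 + C2 *ᵥ (fun z => noiseFam E ε Ex z ω)))) := by
    intro ω
    rw [full_deriv W hW β0 j (Xobs X (Ex ω)) (Yobs W ρ0 X β0 (E ω) (ε ω)) ρ0,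
      hv00n ω, huA ω, ← hA0, ← hAd]
    have hY2 : W *ᵥ Yobs W ρ0 X β0 (E ω) (ε ω)
        = W *ᵥ ybar + (W * LY) *ᵥ (fun z => noiseFam E ε Ex z ω) := by
      rw [hYobsA ω, Matrix.mulVec_add, Matrix.mulVec_mulVec]
    rw [hY2]
    have hfac1 : Ad *ᵥ (LP *ᵥ (fun z => noiseFam E ε Ex z ω))
          + A0 *ᵥ (-(W *ᵥ ybar + (W * LY) *ᵥ (fun z => noiseFam E ε Ex z ω)))
        = a1 + B1 *ᵥ (fun z => noiseFam E ε Ex z ω) := by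
      rw [Matrix.mulVec_neg, Matrix.mulVec_add, Matrix.mulVec_mulVec,
        Matrix.mulVec_mulVec, Matrix.mulVec_mulVec, hB1, Matrix.sub_mulVec,
        ha1, ← Matrix.mul_assoc]
      abel
    have hfac2 : A0 *ᵥ (u0 + Lu *ᵥ (fun z => noiseFam E ε Ex z ω))
        = g1 + C1 *ᵥ (fun z => noiseFam E ε Ex z ω) := by
      rw [Matrix.mulVec_add, Matrix.mulVec_mulVec, hg1, hC1]
    have hfac3 : A0 *ᵥ (LP *ᵥ (fun z => noiseFam E ε Ex z ω))
        = (0 : Fin N → ℝ) + B2 *ᵥ (fun z => noiseFam E ε Ex z ω) := by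
      rw [Matrix.mulVec_mulVec, hB2, zero_add]
    have hfac4 : Ad *ᵥ (u0 + Lu *ᵥ (fun z => noiseFam E ε Ex z ω))
        = g2 + C2 *ᵥ (fun z => noiseFam E ε Ex z ω) := by
      rw [Matrix.mulVec_add, Matrix.mulVec_mulVec, hg2, hC2]
    rw [hfac1, hfac2, hfac3, hfac4]
  have hDt : ∀ ω, deriv (fun ρ => deriv (fun t : ℝ =>
        lsObj W X (Ytrue W ρ0 X β0 (E ω)) ρ
          (β0 + t • (Pi.single j 1 : (Fin p1 ⊕ Fin p2) → ℝ))) 0) ρ0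
      = -2 * (((a1 + B1t *ᵥ (fun z => noiseFam E ε Ex z ω)) ⬝ᵥ
            (g1 + (0 : Matrix (Fin N) (Fin N ⊕ Fin N ⊕ Fin N × Fin p2) ℝ) *ᵥ
              (fun z => noiseFam E ε Ex z ω)))
          + (((0 : Fin N → ℝ) + B2t *ᵥ (fun z => noiseFam E ε Ex z ω)) ⬝ᵥ
            (g2 + (0 : Matrix (Fin N) (Fin N ⊕ Fin N ⊕ Fin N × Fin p2) ℝ) *ᵥ
              (fun z => noiseFam E ε Ex z ω)))) := by
    intro ω
    rw [full_deriv W hW β0 j X (Ytrue W ρ0 X β0 (E ω)) ρ0,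
      hv00t ω, ← hA0, ← hAd, ← hu0]
    have hY2 : W *ᵥ Ytrue W ρ0 X β0 (E ω)
        = W *ᵥ ybar + (W * LYt) *ᵥ (fun z => noiseFam E ε Ex z ω) := by
      rw [hYtrueA ω, Matrix.mulVec_add, Matrix.mulVec_mulVec]
    rw [hY2]
    have hfac1 : Ad *ᵥ (MEmat N p2 *ᵥ (fun z => noiseFam E ε Ex z ω))
          + A0 *ᵥ (-(W *ᵥ ybar + (W * LYt) *ᵥ (fun z => noiseFam E ε Ex z ω)))
        = a1 + B1t *ᵥ (fun z => noiseFam E ε Ex z ω) := by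
      rw [Matrix.mulVec_neg, Matrix.mulVec_add, Matrix.mulVec_mulVec,
        Matrix.mulVec_mulVec, Matrix.mulVec_mulVec, hB1t, Matrix.sub_mulVec,
        ha1, ← Matrix.mul_assoc]
      abel
    have hfac2 : A0 *ᵥ u0 = g1 + (0 : Matrix (Fin N) (Fin N ⊕ Fin N ⊕ Fin N × Fin p2) ℝ) *ᵥ
        (fun z => noiseFam E ε Ex z ω) := by
      rw [Matrix.zero_mulVec, hg1, add_zero]
    have hfac3 : A0 *ᵥ (MEmat N p2 *ᵥ (fun z => noiseFam E ε Ex z ω))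
        = (0 : Fin N → ℝ) + B2t *ᵥ (fun z => noiseFam E ε Ex z ω) := by
      rw [Matrix.mulVec_mulVec, hB2t, zero_add]
    have hfac4 : Ad *ᵥ u0 = g2 + (0 : Matrix (Fin N) (Fin N ⊕ Fin N ⊕ Fin N × Fin p2) ℝ) *ᵥ
        (fun z => noiseFam E ε Ex z ω) := by
      rw [Matrix.zero_mulVec, hg2, add_zero]
    rw [hfac1, hfac2, hfac3, hfac4]
  -- integrals
  have hIn : (∫ ω, deriv (fun ρ => deriv (fun t : ℝ =>
        lsObj W (Xobs X (Ex ω)) (Yobs W ρ0 X β0 (E ω) (ε ω)) ρ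
          (β0 + t • (Pi.single j 1 : (Fin p1 ⊕ Fin p2) → ℝ))) 0) ρ0 ∂μ)
      = -2 * ((a1 ⬝ᵥ g1 + ∑ z, (B1ᵀ * C1) z z * ∫ ω, (noiseFam E ε Ex z ω) ^ 2 ∂μ)
          + ((0 : Fin N → ℝ) ⬝ᵥ g2
            + ∑ z, (B2ᵀ * C2) z z * ∫ ω, (noiseFam E ε Ex z ω) ^ 2 ∂μ)) := by
    rw [funext hDn, integral_const_mul,
      integral_add (integrable_affine hindep hmom B1 C1 a1 g1)
        (integrable_affine hindep hmom B2 C2 0 g2),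
      int_affine hindep hmom hmean B1 C1 a1 g1,
      int_affine hindep hmom hmean B2 C2 0 g2]
  have hIt : (∫ ω, deriv (fun ρ => deriv (fun t : ℝ =>
        lsObj W X (Ytrue W ρ0 X β0 (E ω)) ρ
          (β0 + t • (Pi.single j 1 : (Fin p1 ⊕ Fin p2) → ℝ))) 0) ρ0 ∂μ)
      = -2 * ((a1 ⬝ᵥ g1 + ∑ z, (B1tᵀ * (0 : Matrix (Fin N) (Fin N ⊕ Fin N ⊕ Fin N × Fin p2) ℝ))
            z z * ∫ ω, (noiseFam E ε Ex z ω) ^ 2 ∂μ)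
          + ((0 : Fin N → ℝ) ⬝ᵥ g2
            + ∑ z, (B2tᵀ * (0 : Matrix (Fin N) (Fin N ⊕ Fin N ⊕ Fin N × Fin p2) ℝ))
              z z * ∫ ω, (noiseFam E ε Ex z ω) ^ 2 ∂μ)) := by
    rw [funext hDt, integral_const_mul,
      integral_add (integrable_affine hindep hmom B1t 0 a1 g1)
        (integrable_affine hindep hmom B2t 0 0 g2),
      int_affine hindep hmom hmean B1t 0 a1 g1,
      int_affine hindep hmom hmean B2t 0 0 g2]
  -- entry computations
  have hC1a : ∀ i c, C1 i (Sum.inl c) = 0 := by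
    intro i c; rw [hC1, hLu]; exact mul_MXmat_E0 _ _ i c
  have hC1b : ∀ i c, C1 i (Sum.inr (Sum.inl c)) = 0 := by
    intro i c; rw [hC1, hLu]; exact mul_MXmat_eps0 _ _ i c
  have hC1x : ∀ i b m, C1 i (Sum.inr (Sum.inr (b, m)))
      = A0 i b * (Pi.single j 1 : (Fin p1 ⊕ Fin p2) → ℝ) (Sum.inr m) := by
    intro i b m; rw [hC1, hLu]; exact mul_MXmat_Ex _ _ i b m
  have hC2a : ∀ i c, C2 i (Sum.inl c) = 0 := by
    intro i c; rw [hC2, hLu]; exact mul_MXmat_E0 _ _ i c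
  have hC2b : ∀ i c, C2 i (Sum.inr (Sum.inl c)) = 0 := by
    intro i c; rw [hC2, hLu]; exact mul_MXmat_eps0 _ _ i c
  have hC2x : ∀ i b m, C2 i (Sum.inr (Sum.inr (b, m)))
      = Ad i b * (Pi.single j 1 : (Fin p1 ⊕ Fin p2) → ℝ) (Sum.inr m) := by
    intro i b m; rw [hC2, hLu]; exact mul_MXmat_Ex _ _ i b m
  have hB1x : ∀ i b m, B1 i (Sum.inr (Sum.inr (b, m))) = -(Ad i b * β0 (Sum.inr m)) := by
    intro i b m
    rw [hB1, hLP, hLY, Matrix.mul_sub, Matrix.mul_add, Matrix.mul_add,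
      ← Matrix.mul_assoc, ← Matrix.mul_assoc]
    simp [Matrix.sub_apply, Matrix.add_apply, mul_MEmat_Ex0, mul_Mepsmat_Ex0,
      mul_MXmat_Ex]
  have hB2x : ∀ i b m, B2 i (Sum.inr (Sum.inr (b, m))) = -(A0 i b * β0 (Sum.inr m)) := by
    intro i b m
    rw [hB2, hLP, Matrix.mul_sub, Matrix.mul_add, ← Matrix.mul_assoc]
    simp [Matrix.sub_apply, Matrix.add_apply, mul_MEmat_Ex0, mul_Mepsmat_Ex0,
      mul_MXmat_Ex]
  have hVx : ∀ (b : Fin N) (m : Fin p2),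
      (fun z => ∫ ω, (noiseFam E ε Ex z ω) ^ 2 ∂μ) (Sum.inr (Sum.inr (b, m))) = lamx2 :=
    fun b m => hExvar b m
  have hS1 := S_sum Ad A0 β0 (Pi.single j 1)
    (fun z => ∫ ω, (noiseFam E ε Ex z ω) ^ 2 ∂μ) lamx2 hVx B1 C1 hC1a hC1b hC1x hB1x
  have hS2 := S_sum A0 Ad β0 (Pi.single j 1)
    (fun z => ∫ ω, (noiseFam E ε Ex z ω) ^ 2 ∂μ) lamx2 hVx B2 C2 hC2a hC2b hC2x hB2x
  have hz1 : ∑ z, (B1tᵀ * (0 : Matrix (Fin N) (Fin N ⊕ Fin N ⊕ Fin N × Fin p2) ℝ)) z z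
      * ∫ ω, (noiseFam E ε Ex z ω) ^ 2 ∂μ = 0 := by
    simp [Matrix.mul_zero]
  have hz2 : ∑ z, (B2tᵀ * (0 : Matrix (Fin N) (Fin N ⊕ Fin N ⊕ Fin N × Fin p2) ℝ)) z z
      * ∫ ω, (noiseFam E ε Ex z ω) ^ 2 ∂μ = 0 := by
    simp [Matrix.mul_zero]
  have hττ : (∑ b, ∑ i, A0 i b * Ad i b) = ∑ b, ∑ i, Ad i b * A0 i b :=
    Finset.sum_congr rfl fun b _ => Finset.sum_congr rfl fun i _ => mul_comm _ _
  have htr : (∑ b, ∑ i, Ad i b * A0 i b)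
      = Matrix.trace (Smat W ρ0 * dmat W ρ0 * dmatDot W ρ0 * (Smat W ρ0)ᵀ)
        - Matrix.trace (W * (dmat W ρ0 * dmat W ρ0) * (Smat W ρ0)ᵀ) := by
    rw [hA0, hAd]
    have h1 : (∑ b, ∑ i, Adot W ρ0 i b * Amat W ρ0 i b)
        = Matrix.trace ((Amat W ρ0)ᵀ * Adot W ρ0) := by
      rw [← Matrix.trace_transpose, Matrix.transpose_mul, Matrix.transpose_transpose]
      simp only [Matrix.trace, Matrix.diag, Matrix.mul_apply, Matrix.transpose_apply]
    rw [h1]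
    have hdT : (dmat W ρ0)ᵀ = dmat W ρ0 := by
      unfold dmat; exact Matrix.diagonal_transpose _
    have hA0T : (Amat W ρ0)ᵀ = Smat W ρ0 * dmat W ρ0 := by
      unfold Amat
      rw [Matrix.transpose_mul, Matrix.transpose_transpose, hdT]
    rw [hA0T]
    unfold Adot
    rw [Matrix.mul_sub, Matrix.trace_sub]
    congr 1
    · rw [← Matrix.mul_assoc]
    · rw [← Matrix.trace_transpose, Matrix.transpose_mul, Matrix.transpose_mul,
        Matrix.transpose_transpose, hdT, Matrix.transpose_mul, hdT]
      simp [Matrix.mul_assoc]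
  -- final assembly
  rw [hIn, hIt, hS1, hS2, hz1, hz2, hττ, htr]
  rcases j with l | k
  · simp only [Sum.elim_inl]
    have hβe : (∑ m, β0 (Sum.inr m)
        * (Pi.single (Sum.inl l) 1 : (Fin p1 ⊕ Fin p2) → ℝ) (Sum.inr m)) = 0 := by
      simp
    rw [hβe]
    ring
  · simp only [Sum.elim_inr]
    have hβe : (∑ m, β0 (Sum.inr m)
        * (Pi.single (Sum.inr k) 1 : (Fin p1 ⊕ Fin p2) → ℝ) (Sum.inr m)) = β0 (Sum.inr k) := by
      simp [Pi.single_apply]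
    rw [hβe]
    ring

end PSAR
end
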